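/- Let f: R^d → R be μ-strongly convex with L₁-Lipschitz gradient and L₂-Lipschitz Hessian, minimized at x_*, and consider the monotonic randomized BFGS iterates (x_k, B_k) with x₊ = x_k − B_k∇f(x_k), x_{k+1} = argmin{f(x₊), f(x_k)}, B_{k+1} = BFGS(B_k, ∇²f(x_k), S_k), S_k ~ D i.i.d. Suppose the Lyapunov function Ψ_k = √(f(x_k) − f(x_*)) + β‖B_k − H_*⁻¹‖²_{F(H_*)} (with β = 4√2·L₁^{5/2}/(μL₂ρ)) satisfies E[Ψ_{k+1}] ≤ (1 − ρ/2)E[Ψ_k] for some ρ ∈ (0,1]. Then the ratio √((f(x_{k+1}) − f(x_*))/(f(x_k) − f(x_*))) converges to 0 with probability 1. -/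

import Mathlib

open Matrix MeasureTheory Filter
open scoped Classical

noncomputable section

/-- Vectors in `ℝ^d` with the Euclidean (2-)norm. -/
abbrev Vec (d : ℕ) := EuclideanSpace ℝ (Fin d)

/-- Matrix square root of a positive semidefinite matrix (junk value `0` otherwise). -/
noncomputable def msqrt {d : ℕ} (M : Matrix (Fin d) (Fin d) ℝ) : Matrix (Fin d) (Fin d) ℝ :=
  if h : M.PosSemidef then
    (h.1.eigenvectorUnitary : Matrix (Fin d) (Fin d) ℝ) *
      diagonal ((↑) ∘ (√·) ∘ h.1.eigenvalues) *
      (star h.1.eigenvectorUnitary : Matrix (Fin d) (Fin d) ℝ)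
  else 0

/-- Frobenius norm of a square matrix. -/
noncomputable def frobNorm {d : ℕ} (M : Matrix (Fin d) (Fin d) ℝ) : ℝ :=
  Real.sqrt (Matrix.trace (Mᵀ * M))

/-- Weighted Frobenius norm `‖W‖_{F(H)} = ‖H^{1/2} W H^{1/2}‖_F`. -/
noncomputable def wFrob {d : ℕ} (H W : Matrix (Fin d) (Fin d) ℝ) : ℝ :=
  frobNorm (msqrt H * W * msqrt H)

/-- Local norm `‖v‖_H = √⟨H v, v⟩`. -/
noncomputable def localNorm {d : ℕ} (H : Matrix (Fin d) (Fin d) ℝ) (v : Vec d) : ℝ :=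
  Real.sqrt (inner ℝ (Matrix.toEuclideanLin H v) v : ℝ)

/-- `f` is self-concordant, expressed through its Hessian map `Hf`:
the Hessian is everywhere positive definite and the local norms at nearby points are
comparable. -/
def SelfConcordant {d : ℕ} (Hf : Vec d → Matrix (Fin d) (Fin d) ℝ) : Prop :=
  (∀ x, (Hf x).PosDef) ∧
  ∀ x y v : Vec d, localNorm (Hf x) (y - x) < 1 → v ≠ 0 →
    1 - localNorm (Hf x) (y - x) ≤ localNorm (Hf y) v / localNorm (Hf x) v ∧
      localNorm (Hf y) v / localNorm (Hf x) v ≤ 1 / (1 - localNorm (Hf x) (y - x))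

/-- `g` is the gradient of `f` and `Hf` is its Hessian (the derivative of the gradient). -/
def IsGradHess {d : ℕ} (f : Vec d → ℝ) (g : Vec d → Vec d)
    (Hf : Vec d → Matrix (Fin d) (Fin d) ℝ) : Prop :=
  (∀ x, HasGradientAt f (g x) x) ∧
  ∀ x, HasFDerivAt g (Matrix.toEuclideanCLM (𝕜 := ℝ) (Hf x) : Vec d →L[ℝ] Vec d) x

/-- Smallest eigenvalue of a symmetric matrix, via the Rayleigh quotient. -/
noncomputable def lambdaMin {d : ℕ} (M : Matrix (Fin d) (Fin d) ℝ) : ℝ :=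
  ⨅ v : {v : Vec d // ‖v‖ = 1}, (inner ℝ (Matrix.toEuclideanLin M v.1) v.1 : ℝ)

/-- Entrywise expectation of a random matrix. -/
noncomputable def expMat {Ω : Type*} [MeasurableSpace Ω] (μ : Measure Ω)
    {m n : ℕ} (M : Ω → Matrix (Fin m) (Fin n) ℝ) : Matrix (Fin m) (Fin n) ℝ :=
  Matrix.of fun i j => ∫ ω, M ω i j ∂μ

/-- The projection matrix `Z = H^{1/2} S (Sᵀ H S)⁻¹ Sᵀ H^{1/2}`. -/
noncomputable def sketchProj {d τ : ℕ} (H : Matrix (Fin d) (Fin d) ℝ)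
    (S : Matrix (Fin d) (Fin τ) ℝ) : Matrix (Fin d) (Fin d) ℝ :=
  msqrt H * S * (Sᵀ * H * S)⁻¹ * Sᵀ * msqrt H

/-- The (randomized) BFGS update
`BFGS(B, H, S) = G + (I - G H) B (I - H G)` with `G = S (Sᵀ H S)⁻¹ Sᵀ`. -/
noncomputable def bfgsUpdate {d τ : ℕ} (B H : Matrix (Fin d) (Fin d) ℝ)
    (S : Matrix (Fin d) (Fin τ) ℝ) : Matrix (Fin d) (Fin d) ℝ :=
  S * (Sᵀ * H * S)⁻¹ * Sᵀ +
    (1 - S * (Sᵀ * H * S)⁻¹ * Sᵀ * H) * B * (1 - H * (S * (Sᵀ * H * S)⁻¹ * Sᵀ))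

/-- Spectral (operator 2-)norm of a matrix. -/
noncomputable def opNorm2 {d : ℕ} (M : Matrix (Fin d) (Fin d) ℝ) : ℝ :=
  ‖(Matrix.toEuclideanCLM (𝕜 := ℝ) M : Vec d →L[ℝ] Vec d)‖

instance matrixMeasurableSpace {m n : Type*} : MeasurableSpace (Matrix m n ℝ) :=
  MeasurableSpace.pi

/-- The sketching matrices `S k` are i.i.d. samples from a common distribution `D`. -/
def IIDSketch {d τ : ℕ} {Ω : Type*} [MeasurableSpace Ω] (μ : Measure Ω)
    (S : ℕ → Ω → Matrix (Fin d) (Fin τ) ℝ) : Prop :=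
  (∀ k, Measurable (S k)) ∧
  ProbabilityTheory.iIndepFun (m := fun _ => matrixMeasurableSpace) S μ ∧
  ∀ k, Measure.map (S k) μ = Measure.map (S 0) μ

end


section Aux

open Matrix

variable {d τ : ℕ}

/-! ### Basic operator norm and inner product lemmas -/

lemma tCLM_apply (M : Matrix (Fin d) (Fin d) ℝ) (v : Vec d) :
    (Matrix.toEuclideanCLM (𝕜 := ℝ) M : Vec d →L[ℝ] Vec d) v = Matrix.toEuclideanLin M v := by
  have := Matrix.coe_toEuclideanCLM_eq_toEuclideanLin (n := Fin d) (𝕜 := ℝ) M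
  exact congrFun (congrArg (fun (f : Vec d →ₗ[ℝ] Vec d) => (f : Vec d → Vec d)) this) v

lemma norm_tEL_le (M : Matrix (Fin d) (Fin d) ℝ) (v : Vec d) :
    ‖Matrix.toEuclideanLin M v‖ ≤ opNorm2 M * ‖v‖ := by
  rw [← tCLM_apply]; exact ContinuousLinearMap.le_opNorm _ v

lemma opNorm2_nonneg (M : Matrix (Fin d) (Fin d) ℝ) : 0 ≤ opNorm2 M := norm_nonneg _

lemma opNorm2_le_bound {M : Matrix (Fin d) (Fin d) ℝ} {c : ℝ} (hc : 0 ≤ c)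
    (h : ∀ v : Vec d, ‖Matrix.toEuclideanLin M v‖ ≤ c * ‖v‖) : opNorm2 M ≤ c := by
  refine ContinuousLinearMap.opNorm_le_bound _ hc fun v => ?_
  rw [tCLM_apply]; exact h v

lemma opNorm2_mul_le (A B : Matrix (Fin d) (Fin d) ℝ) :
    opNorm2 (A * B) ≤ opNorm2 A * opNorm2 B := by
  unfold opNorm2
  rw [_root_.map_mul]
  exact ContinuousLinearMap.opNorm_comp_le _ _

lemma opNorm2_add_le (A B : Matrix (Fin d) (Fin d) ℝ) :
    opNorm2 (A + B) ≤ opNorm2 A + opNorm2 B := by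
  unfold opNorm2; rw [_root_.map_add]; exact norm_add_le _ _

lemma opNorm2_neg (A : Matrix (Fin d) (Fin d) ℝ) : opNorm2 (-A) = opNorm2 A := by
  unfold opNorm2; rw [_root_.map_neg, norm_neg]

lemma opNorm2_sub_comm (A B : Matrix (Fin d) (Fin d) ℝ) :
    opNorm2 (A - B) = opNorm2 (B - A) := by
  rw [← opNorm2_neg, neg_sub]

lemma opNorm2_sub_le (A B : Matrix (Fin d) (Fin d) ℝ) :
    opNorm2 (A - B) ≤ opNorm2 A + opNorm2 B := by
  rw [sub_eq_add_neg]
  calc opNorm2 (A + -B) ≤ opNorm2 A + opNorm2 (-B) := opNorm2_add_le _ _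
    _ = opNorm2 A + opNorm2 B := by rw [opNorm2_neg]

lemma opNorm2_one_le : opNorm2 (1 : Matrix (Fin d) (Fin d) ℝ) ≤ 1 := by
  refine opNorm2_le_bound zero_le_one fun v => ?_
  have : Matrix.toEuclideanLin (1 : Matrix (Fin d) (Fin d) ℝ) v = v := by
    simp [Matrix.toEuclideanLin_apply]
  rw [this, one_mul]

lemma opNorm2_zero : opNorm2 (0 : Matrix (Fin d) (Fin d) ℝ) = 0 := by
  unfold opNorm2; rw [_root_.map_zero, norm_zero]

lemma tEL_mul_apply (A B : Matrix (Fin d) (Fin d) ℝ) (v : Vec d) :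
    Matrix.toEuclideanLin (A * B) v = Matrix.toEuclideanLin A (Matrix.toEuclideanLin B v) := by
  simp [Matrix.toEuclideanLin_apply, Matrix.mulVec_mulVec]

lemma tEL_one (v : Vec d) : Matrix.toEuclideanLin (1 : Matrix (Fin d) (Fin d) ℝ) v = v := by
  simp [Matrix.toEuclideanLin_apply]

lemma tEL_sub_apply (A B : Matrix (Fin d) (Fin d) ℝ) (v : Vec d) :
    Matrix.toEuclideanLin (A - B) v = Matrix.toEuclideanLin A v - Matrix.toEuclideanLin B v := by
  rw [_root_.map_sub]; rfl

lemma tEL_add_apply (A B : Matrix (Fin d) (Fin d) ℝ) (v : Vec d) :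
    Matrix.toEuclideanLin (A + B) v = Matrix.toEuclideanLin A v + Matrix.toEuclideanLin B v := by
  rw [_root_.map_add]; rfl

lemma inner_eq_dot (x y : Vec d) :
    (inner ℝ x y : ℝ) = dotProduct (WithLp.equiv 2 _ x) (WithLp.equiv 2 _ y) := by
  rw [EuclideanSpace.inner_eq_star_dotProduct, dotProduct_comm]; simp

lemma inner_tEL (M : Matrix (Fin d) (Fin d) ℝ) (v w : Vec d) :
    (inner ℝ (Matrix.toEuclideanLin M v) w : ℝ) =
      dotProduct (M.mulVec (WithLp.equiv 2 _ v)) (WithLp.equiv 2 _ w) := by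
  rw [inner_eq_dot]; congr 1

lemma inner_tEL_right (M : Matrix (Fin d) (Fin d) ℝ) (v w : Vec d) :
    (inner ℝ v (Matrix.toEuclideanLin M w) : ℝ) =
      dotProduct (WithLp.equiv 2 _ v) (M.mulVec (WithLp.equiv 2 _ w)) := by
  rw [inner_eq_dot]; congr 1

lemma inner_tEL_symm {M : Matrix (Fin d) (Fin d) ℝ} (hM : Mᵀ = M) (v w : Vec d) :
    (inner ℝ (Matrix.toEuclideanLin M v) w : ℝ) = (inner ℝ v (Matrix.toEuclideanLin M w) : ℝ) := by
  rw [inner_tEL, inner_tEL_right, dotProduct_mulVec, ← Matrix.mulVec_transpose, hM]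

lemma dot_self_eq (w : Fin d → ℝ) :
    dotProduct w w = ‖((WithLp.equiv 2 (Fin d → ℝ)).symm w : Vec d)‖ ^ 2 := by
  rw [← real_inner_self_eq_norm_sq]; rfl

lemma dot_le_norm_mul_norm (a b : Fin d → ℝ) :
    dotProduct a b ≤ ‖((WithLp.equiv 2 (Fin d → ℝ)).symm a : Vec d)‖ *
      ‖((WithLp.equiv 2 (Fin d → ℝ)).symm b : Vec d)‖ := by
  have : dotProduct a b
      = (inner ℝ ((WithLp.equiv 2 (Fin d → ℝ)).symm a : Vec d)
          ((WithLp.equiv 2 (Fin d → ℝ)).symm b) : ℝ) := by rw [inner_eq_dot]; simp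
  rw [this]
  exact real_inner_le_norm _ _

/-! ### Frobenius norm lemmas -/

lemma trace_transpose_mul (M : Matrix (Fin d) (Fin d) ℝ) :
    Matrix.trace (Mᵀ * M) = ∑ j, ∑ i, (M i j) ^ 2 := by
  simp [Matrix.trace, Matrix.diag, Matrix.mul_apply, sq]

lemma frobNorm_eq (M : Matrix (Fin d) (Fin d) ℝ) :
    frobNorm M = Real.sqrt (∑ j, ∑ i, (M i j) ^ 2) := by
  rw [frobNorm, trace_transpose_mul]

lemma frobNorm_nonneg (M : Matrix (Fin d) (Fin d) ℝ) : 0 ≤ frobNorm M := Real.sqrt_nonneg _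

lemma wFrob_nonneg (H M : Matrix (Fin d) (Fin d) ℝ) : 0 ≤ wFrob H M := Real.sqrt_nonneg _

lemma opNorm2_le_frobNorm (M : Matrix (Fin d) (Fin d) ℝ) : opNorm2 M ≤ frobNorm M := by
  refine opNorm2_le_bound (frobNorm_nonneg M) fun v => ?_
  have hnorm : ‖Matrix.toEuclideanLin M v‖
      = Real.sqrt (∑ i, (M.mulVec (WithLp.equiv 2 _ v) i) ^ 2) := by
    rw [EuclideanSpace.norm_eq]
    congr 1
    refine Finset.sum_congr rfl fun i _ => ?_
    rw [Real.norm_eq_abs, sq_abs]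
    rfl
  have hv : ‖v‖ = Real.sqrt (∑ j, (WithLp.equiv 2 _ v j) ^ 2) := by
    rw [EuclideanSpace.norm_eq]
    congr 1
    refine Finset.sum_congr rfl fun j _ => ?_
    rw [Real.norm_eq_abs, sq_abs]
    rfl
  rw [hnorm, hv, frobNorm_eq, ← Real.sqrt_mul (by positivity)]
  apply Real.sqrt_le_sqrt
  calc ∑ i, (M.mulVec (WithLp.equiv 2 _ v) i) ^ 2
      ≤ ∑ i, ((∑ j, (M i j) ^ 2) * ∑ j, (WithLp.equiv 2 _ v j) ^ 2) := by
        refine Finset.sum_le_sum fun i _ => ?_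
        exact Finset.sum_mul_sq_le_sq_mul_sq Finset.univ (fun j => M i j)
          (fun j => WithLp.equiv 2 _ v j)
    _ = (∑ j, ∑ i, (M i j) ^ 2) * ∑ j, (WithLp.equiv 2 _ v j) ^ 2 := by
        rw [← Finset.sum_mul, Finset.sum_comm]

lemma coord_le_norm (x : Vec d) (i : Fin d) : |x i| ≤ ‖x‖ := by
  rw [EuclideanSpace.norm_eq]
  have h : |x i| = Real.sqrt ((x i) ^ 2) := by rw [Real.sqrt_sq_eq_abs]
  rw [h]
  apply Real.sqrt_le_sqrt
  have := Finset.single_le_sum (f := fun j => ‖x j‖ ^ 2) (fun _ _ => sq_nonneg _)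
    (Finset.mem_univ i)
  simpa [Real.norm_eq_abs, sq_abs] using this

lemma abs_entry_le_opNorm2 (M : Matrix (Fin d) (Fin d) ℝ) (i j : Fin d) :
    |M i j| ≤ opNorm2 M := by
  have h := norm_tEL_le M (EuclideanSpace.single j 1)
  have h1 : ‖(EuclideanSpace.single j (1:ℝ) : Vec d)‖ = 1 := by
    simp [EuclideanSpace.norm_single]
  have hentry : (Matrix.toEuclideanLin M (EuclideanSpace.single j (1:ℝ))) i = M i j := by
    show (M.mulVec (WithLp.equiv 2 _ (EuclideanSpace.single j (1:ℝ)))) i = M i j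
    have heq : (WithLp.equiv 2 (Fin d → ℝ)) (EuclideanSpace.single j (1:ℝ)) = Pi.single j 1 := rfl
    rw [heq, Matrix.mulVec_single]
    simp
  calc |M i j| = |(Matrix.toEuclideanLin M (EuclideanSpace.single j (1:ℝ))) i| := by rw [hentry]
    _ ≤ ‖Matrix.toEuclideanLin M (EuclideanSpace.single j (1:ℝ))‖ := coord_le_norm _ i
    _ ≤ opNorm2 M * 1 := by
        calc ‖Matrix.toEuclideanLin M (EuclideanSpace.single j (1:ℝ))‖
            ≤ opNorm2 M * ‖(EuclideanSpace.single j (1:ℝ) : Vec d)‖ := h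
          _ = opNorm2 M * 1 := by rw [h1]
    _ = opNorm2 M := mul_one _

lemma frobNorm_le_opNorm2 (M : Matrix (Fin d) (Fin d) ℝ) : frobNorm M ≤ d * opNorm2 M := by
  rw [frobNorm_eq]
  have h : (∑ j, ∑ i, (M i j) ^ 2) ≤ (d : ℝ) ^ 2 * opNorm2 M ^ 2 := by
    calc (∑ j, ∑ i, (M i j) ^ 2) ≤ ∑ _j : Fin d, ∑ _i : Fin d, opNorm2 M ^ 2 := by
          refine Finset.sum_le_sum fun j _ => Finset.sum_le_sum fun i _ => ?_
          rw [← sq_abs]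
          exact pow_le_pow_left₀ (abs_nonneg _) (abs_entry_le_opNorm2 M i j) 2
      _ = (d : ℝ) ^ 2 * opNorm2 M ^ 2 := by
          simp [Finset.sum_const]; ring
  calc Real.sqrt (∑ j, ∑ i, (M i j) ^ 2) ≤ Real.sqrt ((d:ℝ)^2 * opNorm2 M ^2) :=
        Real.sqrt_le_sqrt h
    _ = d * opNorm2 M := by
        rw [show ((d:ℝ)^2 * opNorm2 M ^2) = (d * opNorm2 M)^2 by ring]
        exact Real.sqrt_sq (mul_nonneg (Nat.cast_nonneg d) (opNorm2_nonneg M))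

/-! ### Square root lemmas -/

lemma real_conjTranspose {e : ℕ} (A : Matrix (Fin d) (Fin e) ℝ) : Aᴴ = Aᵀ := by
  ext i j; simp [Matrix.conjTranspose_apply]

lemma msqrt_of_psd {H : Matrix (Fin d) (Fin d) ℝ} (h : H.PosSemidef) :
    msqrt H = (h.1.eigenvectorUnitary : Matrix (Fin d) (Fin d) ℝ) *
      diagonal ((↑) ∘ (√·) ∘ h.1.eigenvalues) *
      (star h.1.eigenvectorUnitary : Matrix (Fin d) (Fin d) ℝ) := by rw [msqrt, dif_pos h]

lemma msqrt_mul_self {H : Matrix (Fin d) (Fin d) ℝ} (h : H.PosSemidef) :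
    msqrt H * msqrt H = H := by
  rw [msqrt_of_psd h]
  conv_rhs => rw [h.1.spectral_theorem, Unitary.conjStarAlgAut_apply]
  have hU : (star h.1.eigenvectorUnitary : Matrix (Fin d) (Fin d) ℝ) *
      (h.1.eigenvectorUnitary : Matrix (Fin d) (Fin d) ℝ) = 1 := Unitary.coe_star_mul_self _
  simp only [Matrix.mul_assoc]
  rw [← Matrix.mul_assoc _ (h.1.eigenvectorUnitary : Matrix (Fin d) (Fin d) ℝ), hU,
    Matrix.one_mul, ← Matrix.mul_assoc (diagonal _), diagonal_mul_diagonal]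
  congr 3
  funext i
  simp [Real.mul_self_sqrt (h.eigenvalues_nonneg i)]

lemma msqrt_posSemidef {H : Matrix (Fin d) (Fin d) ℝ} (h : H.PosSemidef) :
    (msqrt H).PosSemidef := by
  rw [msqrt_of_psd h]
  have hD : (diagonal ((↑) ∘ (√·) ∘ h.1.eigenvalues : Fin d → ℝ)).PosSemidef :=
    posSemidef_diagonal_iff.mpr fun i => by simp [Real.sqrt_nonneg]
  have := hD.mul_mul_conjTranspose_same (h.1.eigenvectorUnitary : Matrix (Fin d) (Fin d) ℝ)
  rwa [← Matrix.star_eq_conjTranspose, ← Unitary.coe_star] at this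

lemma msqrt_transpose {H : Matrix (Fin d) (Fin d) ℝ} (h : H.PosSemidef) :
    (msqrt H)ᵀ = msqrt H := by
  rw [← real_conjTranspose]; exact (msqrt_posSemidef h).1

lemma msqrt_det_isUnit {H : Matrix (Fin d) (Fin d) ℝ} (h : H.PosDef) :
    IsUnit (msqrt H).det := by
  have h2 : (msqrt H).det * (msqrt H).det = H.det := by
    rw [← Matrix.det_mul, msqrt_mul_self h.posSemidef]
  have hne : H.det ≠ 0 := ne_of_gt h.det_pos
  refine isUnit_iff_ne_zero.mpr fun hc => ?_
  rw [hc, mul_zero] at h2; exact hne h2.symm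

lemma msqrt_inv_mul {H : Matrix (Fin d) (Fin d) ℝ} (h : H.PosDef) :
    (msqrt H)⁻¹ * msqrt H = 1 := Matrix.nonsing_inv_mul _ (msqrt_det_isUnit h)

lemma msqrt_mul_inv {H : Matrix (Fin d) (Fin d) ℝ} (h : H.PosDef) :
    msqrt H * (msqrt H)⁻¹ = 1 := Matrix.mul_nonsing_inv _ (msqrt_det_isUnit h)

/-- `‖√H v‖² = ⟨H v, v⟩` for positive semidefinite `H`. -/
lemma norm_msqrt_sq {H : Matrix (Fin d) (Fin d) ℝ} (h : H.PosSemidef) (v : Vec d) :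
    ‖Matrix.toEuclideanLin (msqrt H) v‖ ^ 2 = (inner ℝ (Matrix.toEuclideanLin H v) v : ℝ) := by
  rw [← real_inner_self_eq_norm_sq]
  rw [inner_tEL_symm (msqrt_transpose h), ← tEL_mul_apply, msqrt_mul_self h]
  exact real_inner_comm _ _

/-- `H` positive definite given a strong positivity lower bound. -/
lemma posDef_of_lb {H : Matrix (Fin d) (Fin d) ℝ} {m : ℝ} (hm : 0 < m) (hsymm : Hᵀ = H)
    (hlb : ∀ v : Vec d, m * ‖v‖ ^ 2 ≤ (inner ℝ (Matrix.toEuclideanLin H v) v : ℝ)) :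
    H.PosDef := by
  rw [Matrix.posDef_iff_dotProduct_mulVec]
  constructor
  · rw [Matrix.IsHermitian, real_conjTranspose]; exact hsymm
  · intro x hx
    have hsx : (star x : Fin d → ℝ) = x := by
      funext i; simp
    rw [hsx]
    set v : Vec d := (WithLp.equiv 2 (Fin d → ℝ)).symm x with hv
    have hvx : (WithLp.equiv 2 (Fin d → ℝ)) v = x := rfl
    have h1 : (inner ℝ (Matrix.toEuclideanLin H v) v : ℝ)
        = dotProduct x (H.mulVec x) := by
      rw [inner_tEL, hvx, dotProduct_comm]
    have hv0 : v ≠ 0 := by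
      intro hc
      apply hx
      have := congrArg (WithLp.equiv 2 (Fin d → ℝ)) hc
      rw [← hvx, hc]; simp
    have hnv : 0 < ‖v‖ := norm_pos_iff.mpr hv0
    calc (0:ℝ) < m * ‖v‖ ^ 2 := mul_pos hm (pow_pos hnv 2)
      _ ≤ (inner ℝ (Matrix.toEuclideanLin H v) v : ℝ) := hlb v
      _ = dotProduct x (H.mulVec x) := h1

/-- With a spectral lower bound `m` on `H`, the operator norm is controlled by the weighted
Frobenius norm. -/
lemma opNorm2_le_wFrob {H : Matrix (Fin d) (Fin d) ℝ} {m : ℝ} (hm : 0 < m)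
    (hPD : H.PosDef)
    (hlb : ∀ v : Vec d, m * ‖v‖ ^ 2 ≤ (inner ℝ (Matrix.toEuclideanLin H v) v : ℝ))
    (W : Matrix (Fin d) (Fin d) ℝ) :
    opNorm2 W ≤ m⁻¹ * wFrob H W := by
  have hpsd := hPD.posSemidef
  -- bound on the inverse square root
  have hinv : ∀ v : Vec d, ‖Matrix.toEuclideanLin (msqrt H)⁻¹ v‖
      ≤ Real.sqrt m⁻¹ * ‖v‖ := by
    intro v
    set w := Matrix.toEuclideanLin (msqrt H)⁻¹ v with hw
    have hback : Matrix.toEuclideanLin (msqrt H) w = v := by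
      rw [hw, ← tEL_mul_apply, msqrt_mul_inv hPD, tEL_one]
    have h1 : m * ‖w‖ ^ 2 ≤ ‖v‖ ^ 2 := by
      calc m * ‖w‖ ^ 2 ≤ (inner ℝ (Matrix.toEuclideanLin H w) w : ℝ) := hlb w
        _ = ‖Matrix.toEuclideanLin (msqrt H) w‖ ^ 2 := (norm_msqrt_sq hpsd w).symm
        _ = ‖v‖ ^ 2 := by rw [hback]
    have h2 : ‖w‖ ^ 2 ≤ m⁻¹ * ‖v‖ ^ 2 := by
      rw [← le_div_iff₀' hm] at h1
      rw [div_eq_inv_mul] at h1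
      exact h1
    have h3 : ‖w‖ ≤ Real.sqrt (m⁻¹ * ‖v‖ ^ 2) := by
      rw [← Real.sqrt_sq (norm_nonneg w)]
      exact Real.sqrt_le_sqrt h2
    calc ‖w‖ ≤ Real.sqrt (m⁻¹ * ‖v‖ ^ 2) := h3
      _ = Real.sqrt m⁻¹ * ‖v‖ := by
          rw [Real.sqrt_mul (inv_nonneg.mpr hm.le), Real.sqrt_sq (norm_nonneg v)]
  have hinvop : opNorm2 (msqrt H)⁻¹ ≤ Real.sqrt m⁻¹ :=
    opNorm2_le_bound (Real.sqrt_nonneg _) hinv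
  have hWeq : W = (msqrt H)⁻¹ * (msqrt H * W * msqrt H) * (msqrt H)⁻¹ := by
    have h1 : (msqrt H)⁻¹ * (msqrt H * W * msqrt H) * (msqrt H)⁻¹
        = ((msqrt H)⁻¹ * msqrt H) * W * (msqrt H * (msqrt H)⁻¹) := by
      noncomm_ring
    rw [h1, msqrt_inv_mul hPD, msqrt_mul_inv hPD, one_mul, mul_one]
  calc opNorm2 W = opNorm2 ((msqrt H)⁻¹ * (msqrt H * W * msqrt H) * (msqrt H)⁻¹) := by
        rw [← hWeq]
    _ ≤ opNorm2 ((msqrt H)⁻¹ * (msqrt H * W * msqrt H)) * opNorm2 (msqrt H)⁻¹ :=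
        opNorm2_mul_le _ _
    _ ≤ (opNorm2 (msqrt H)⁻¹ * opNorm2 (msqrt H * W * msqrt H)) * opNorm2 (msqrt H)⁻¹ :=
        mul_le_mul_of_nonneg_right (opNorm2_mul_le _ _) (opNorm2_nonneg _)
    _ ≤ (Real.sqrt m⁻¹ * frobNorm (msqrt H * W * msqrt H)) * Real.sqrt m⁻¹ := by
        apply mul_le_mul
        · exact mul_le_mul hinvop (opNorm2_le_frobNorm _) (opNorm2_nonneg _)
            (Real.sqrt_nonneg _)
        · exact hinvop
        · exact opNorm2_nonneg _
        · exact mul_nonneg (Real.sqrt_nonneg _) (frobNorm_nonneg _)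
    _ = m⁻¹ * wFrob H W := by
        rw [wFrob]
        rw [show (Real.sqrt m⁻¹ * frobNorm (msqrt H * W * msqrt H)) * Real.sqrt m⁻¹
          = (Real.sqrt m⁻¹ * Real.sqrt m⁻¹) * frobNorm (msqrt H * W * msqrt H) by ring]
        rw [Real.mul_self_sqrt (by positivity)]

/-- With a spectral upper bound on `H`, the weighted Frobenius norm is controlled by the
operator norm. -/
lemma wFrob_le_opNorm2 {H : Matrix (Fin d) (Fin d) ℝ} {L : ℝ} (hL : 0 ≤ L)
    (hpsd : H.PosSemidef)
    (hub : ∀ v : Vec d, (inner ℝ (Matrix.toEuclideanLin H v) v : ℝ) ≤ L * ‖v‖ ^ 2)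
    (W : Matrix (Fin d) (Fin d) ℝ) :
    wFrob H W ≤ d * (L * opNorm2 W) := by
  have hsq : opNorm2 (msqrt H) ≤ Real.sqrt L := by
    refine opNorm2_le_bound (Real.sqrt_nonneg _) fun v => ?_
    have h1 : ‖Matrix.toEuclideanLin (msqrt H) v‖ ^ 2 ≤ L * ‖v‖ ^ 2 := by
      rw [norm_msqrt_sq hpsd]; exact hub v
    have := Real.sqrt_le_sqrt h1
    rw [Real.sqrt_sq (norm_nonneg _), Real.sqrt_mul hL, Real.sqrt_sq (norm_nonneg _)] at this
    exact this
  calc wFrob H W = frobNorm (msqrt H * W * msqrt H) := rfl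
    _ ≤ d * opNorm2 (msqrt H * W * msqrt H) := frobNorm_le_opNorm2 _
    _ ≤ d * (opNorm2 (msqrt H * W) * opNorm2 (msqrt H)) := by
        apply mul_le_mul_of_nonneg_left (opNorm2_mul_le _ _) (Nat.cast_nonneg d)
    _ ≤ d * ((opNorm2 (msqrt H) * opNorm2 W) * opNorm2 (msqrt H)) := by
        apply mul_le_mul_of_nonneg_left _ (Nat.cast_nonneg d)
        exact mul_le_mul_of_nonneg_right (opNorm2_mul_le _ _) (opNorm2_nonneg _)
    _ ≤ d * ((Real.sqrt L * opNorm2 W) * Real.sqrt L) := by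
        apply mul_le_mul_of_nonneg_left _ (Nat.cast_nonneg d)
        apply mul_le_mul (mul_le_mul_of_nonneg_right hsq (opNorm2_nonneg _)) hsq
          (opNorm2_nonneg _) (mul_nonneg (Real.sqrt_nonneg _) (opNorm2_nonneg _))
    _ = d * (Real.sqrt L * Real.sqrt L * opNorm2 W) := by ring
    _ = d * (L * opNorm2 W) := by rw [Real.mul_self_sqrt hL]

/-! ### Bound on the sketch projection -/

/-- The operator norm of `G = S (SᵀHS)⁻¹ Sᵀ` is at most `1/m` whenever `H ⪰ m·I`. -/
lemma opNorm2_G_le {H : Matrix (Fin d) (Fin d) ℝ} {m : ℝ} (hm : 0 < m) (hsymm : Hᵀ = H)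
    (hlb : ∀ x : Fin d → ℝ, m * dotProduct x x ≤ dotProduct x (H.mulVec x))
    (S : Matrix (Fin d) (Fin τ) ℝ) :
    opNorm2 (S * (Sᵀ * H * S)⁻¹ * Sᵀ) ≤ m⁻¹ := by
  set A := Sᵀ * H * S with hA
  by_cases hu : IsUnit A.det
  · refine opNorm2_le_bound (by positivity) fun v => ?_
    set x : Fin d → ℝ := WithLp.equiv 2 _ v with hx
    set y : Fin τ → ℝ := A⁻¹.mulVec (Sᵀ.mulVec x) with hy
    set w : Fin d → ℝ := S.mulVec y with hwdef
    have hGv : Matrix.toEuclideanLin (S * (Sᵀ * H * S)⁻¹ * Sᵀ) v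
        = (WithLp.equiv 2 (Fin d → ℝ)).symm w := by
      rw [Matrix.toEuclideanLin_apply]
      congr 1
      rw [← hA, hwdef, hy, ← Matrix.mulVec_mulVec, ← Matrix.mulVec_mulVec]
      rfl
    -- key chain of identities
    have hAsymm : Aᵀ = A := by
      rw [hA, Matrix.transpose_mul, Matrix.transpose_mul, Matrix.transpose_transpose, hsymm,
        Matrix.mul_assoc]
    have key : dotProduct w (H.mulVec w) = dotProduct w x := by
      have h1 : H.mulVec w = (H * S).mulVec y := by rw [hwdef, Matrix.mulVec_mulVec]
      have h2 : dotProduct w ((H * S).mulVec y)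
          = dotProduct (A.mulVec y) y := by
        rw [dotProduct_mulVec, ← Matrix.mulVec_transpose (H*S),
          show (H * S)ᵀ = Sᵀ * Hᵀ from Matrix.transpose_mul _ _, hsymm, hwdef,
          Matrix.mulVec_mulVec, ← hA]
      have h3 : A.mulVec y = Sᵀ.mulVec x := by
        rw [hy, Matrix.mulVec_mulVec, Matrix.mul_nonsing_inv _ hu, Matrix.one_mulVec]
      have h4 : dotProduct (Sᵀ.mulVec x) y = dotProduct w x := by
        rw [dotProduct_comm, dotProduct_mulVec, ← Matrix.mulVec_transpose,
          Matrix.transpose_transpose, dotProduct_comm, ← hwdef]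
      rw [h1, h2, h3, h4]
    set nw := ‖((WithLp.equiv 2 (Fin d → ℝ)).symm w : Vec d)‖ with hnw
    set nx := ‖((WithLp.equiv 2 (Fin d → ℝ)).symm x : Vec d)‖ with hnx
    have hxv : ((WithLp.equiv 2 (Fin d → ℝ)).symm x : Vec d) = v := rfl
    have hbound : m * nw ^ 2 ≤ nw * nx := by
      calc m * nw ^ 2 = m * dotProduct w w := by rw [dot_self_eq w, hnw]
        _ ≤ dotProduct w (H.mulVec w) := hlb w
        _ = dotProduct w x := key
        _ ≤ nw * nx := dot_le_norm_mul_norm w x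
    have hnwle : nw ≤ m⁻¹ * nx := by
      rcases eq_or_lt_of_le (norm_nonneg ((WithLp.equiv 2 (Fin d → ℝ)).symm w : Vec d)) with h0 | h0
      · rw [hnw, ← h0]
        exact mul_nonneg (inv_nonneg.mpr hm.le) (norm_nonneg _)
      · have hle : m * nw ≤ nx := by
          have hb := hbound
          rw [pow_two] at hb
          rw [show m * (nw * nw) = (m * nw) * nw by ring] at hb
          rw [show nw * nx = nx * nw by ring] at hb
          exact le_of_mul_le_mul_right hb h0
        rw [← le_div_iff₀' hm, div_eq_inv_mul] at hle
        exact hle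
    rw [hGv]
    rw [← hnw, ← hxv, ← hnx]
    exact hnwle
  · rw [show S * (Sᵀ * H * S)⁻¹ * Sᵀ = S * A⁻¹ * Sᵀ from rfl,
      Matrix.nonsing_inv_apply_not_isUnit _ hu, Matrix.mul_zero, Matrix.zero_mul, opNorm2_zero]
    exact inv_nonneg.mpr hm.le

/-- Deterministic norm bound for the BFGS update. -/
lemma opNorm2_bfgsUpdate_le {B H : Matrix (Fin d) (Fin d) ℝ} {m L : ℝ} (hm : 0 < m)
    (hL : 0 ≤ L) (hsymm : Hᵀ = H)
    (hlb : ∀ x : Fin d → ℝ, m * dotProduct x x ≤ dotProduct x (H.mulVec x))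
    (hub : opNorm2 H ≤ L) (S : Matrix (Fin d) (Fin τ) ℝ) :
    opNorm2 (bfgsUpdate B H S) ≤ m⁻¹ + (1 + m⁻¹ * L) ^ 2 * opNorm2 B := by
  set G := S * (Sᵀ * H * S)⁻¹ * Sᵀ with hG
  have hGle : opNorm2 G ≤ m⁻¹ := opNorm2_G_le hm hsymm hlb S
  have h1 : opNorm2 (1 - G * H) ≤ 1 + m⁻¹ * L := by
    calc opNorm2 (1 - G * H) ≤ opNorm2 1 + opNorm2 (G * H) := opNorm2_sub_le _ _
      _ ≤ 1 + opNorm2 G * opNorm2 H := add_le_add opNorm2_one_le (opNorm2_mul_le _ _)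
      _ ≤ 1 + m⁻¹ * L := by
          apply add_le_add_right
          exact mul_le_mul hGle hub (opNorm2_nonneg _) (inv_nonneg.mpr hm.le)
  have h2 : opNorm2 (1 - H * G) ≤ 1 + m⁻¹ * L := by
    calc opNorm2 (1 - H * G) ≤ opNorm2 1 + opNorm2 (H * G) := opNorm2_sub_le _ _
      _ ≤ 1 + opNorm2 H * opNorm2 G := add_le_add opNorm2_one_le (opNorm2_mul_le _ _)
      _ ≤ 1 + L * m⁻¹ := by
          apply add_le_add_right
          exact mul_le_mul hub hGle (opNorm2_nonneg _) hL
      _ = 1 + m⁻¹ * L := by ring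
  have hGHB : opNorm2 ((1 - G * H) * B * (1 - H * G))
      ≤ (1 + m⁻¹ * L) ^ 2 * opNorm2 B := by
    calc opNorm2 ((1 - G * H) * B * (1 - H * G))
        ≤ opNorm2 ((1 - G * H) * B) * opNorm2 (1 - H * G) := opNorm2_mul_le _ _
      _ ≤ (opNorm2 (1 - G * H) * opNorm2 B) * opNorm2 (1 - H * G) :=
          mul_le_mul_of_nonneg_right (opNorm2_mul_le _ _) (opNorm2_nonneg _)
      _ ≤ ((1 + m⁻¹ * L) * opNorm2 B) * (1 + m⁻¹ * L) := by
          apply mul_le_mul _ h2 (opNorm2_nonneg _)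
            (mul_nonneg (add_nonneg zero_le_one (mul_nonneg (inv_nonneg.mpr hm.le) hL))
              (opNorm2_nonneg _))
          exact mul_le_mul_of_nonneg_right h1 (opNorm2_nonneg _)
      _ = (1 + m⁻¹ * L) ^ 2 * opNorm2 B := by ring
  calc opNorm2 (bfgsUpdate B H S) = opNorm2 (G + (1 - G * H) * B * (1 - H * G)) := rfl
    _ ≤ opNorm2 G + opNorm2 ((1 - G * H) * B * (1 - H * G)) := opNorm2_add_le _ _
    _ ≤ m⁻¹ + (1 + m⁻¹ * L) ^ 2 * opNorm2 B := add_le_add hGle hGHB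

/-! ### Calculus lemmas -/

/-- The Hessian of `f` is a symmetric matrix. -/
lemma hess_symm {f : Vec d → ℝ} {g : Vec d → Vec d} {Hf : Vec d → Matrix (Fin d) (Fin d) ℝ}
    (hg : ∀ x, HasGradientAt f (g x) x)
    (hH : ∀ x, HasFDerivAt g (Matrix.toEuclideanCLM (𝕜 := ℝ) (Hf x) : Vec d →L[ℝ] Vec d) x)
    (x : Vec d) : (Hf x)ᵀ = Hf x := by
  set T : Vec d →L[ℝ] StrongDual ℝ (Vec d) :=
    (InnerProductSpace.toDualMap ℝ (Vec d)).toContinuousLinearMap with hT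
  have hf' : ∀ y, HasFDerivAt f (T (g y)) y := by
    intro y
    have h1 := (hasGradientAt_iff_hasFDerivAt).mp (hg y)
    have h2 : (T (g y) : Vec d →L[ℝ] ℝ) = (InnerProductSpace.toDual ℝ (Vec d)) (g y) := by
      rfl
    rw [h2]
    exact h1
  have hx : HasFDerivAt (fun y => T (g y))
      (T.comp (Matrix.toEuclideanCLM (𝕜 := ℝ) (Hf x) : Vec d →L[ℝ] Vec d)) x :=
    T.hasFDerivAt.comp x (hH x)
  have hsym := second_derivative_symmetric hf' hx
  have hip : ∀ v w : Vec d,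
      (inner ℝ (Matrix.toEuclideanLin (Hf x) v) w : ℝ)
        = (inner ℝ (Matrix.toEuclideanLin (Hf x) w) v : ℝ) := by
    intro v w
    have := hsym v w
    simp only [ContinuousLinearMap.comp_apply] at this
    have h1 : ∀ u w : Vec d, (T u) w = (inner ℝ u w : ℝ) := fun u w => rfl
    rw [h1, h1] at this
    rw [tCLM_apply, tCLM_apply] at this
    exact this
  ext i j
  have := hip (EuclideanSpace.single j 1) (EuclideanSpace.single i 1)
  have hentry : ∀ (a b : Fin d),
      (inner ℝ (Matrix.toEuclideanLin (Hf x) (EuclideanSpace.single a (1:ℝ)))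
        (EuclideanSpace.single b (1:ℝ)) : ℝ) = Hf x b a := by
    intro a b
    rw [inner_tEL]
    have h1 : (WithLp.equiv 2 (Fin d → ℝ)) (EuclideanSpace.single a (1:ℝ)) = Pi.single a 1 := rfl
    have h2 : (WithLp.equiv 2 (Fin d → ℝ)) (EuclideanSpace.single b (1:ℝ)) = Pi.single b 1 := rfl
    rw [h1, h2, Matrix.mulVec_single]
    simp [dotProduct_single]
  rw [hentry, hentry] at this
  rw [Matrix.transpose_apply]
  exact this.symm

/-- Upper bound on the Hessian from Lipschitzness of the gradient. -/
lemma hess_ub {g : Vec d → Vec d} {Hf : Vec d → Matrix (Fin d) (Fin d) ℝ} {L1 : ℝ}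
    (hH : ∀ x, HasFDerivAt g (Matrix.toEuclideanCLM (𝕜 := ℝ) (Hf x) : Vec d →L[ℝ] Vec d) x)
    (hlip : ∀ x y : Vec d, ‖g y - g x‖ ≤ L1 * ‖y - x‖) (hL1 : 0 ≤ L1) :
    ∀ (x v : Vec d), ‖Matrix.toEuclideanLin (Hf x) v‖ ≤ L1 * ‖v‖ := by
  intro x v
  set γ : ℝ → Vec d := fun t => x + t • v with hγdef
  have hγ0 : γ 0 = x := by simp [hγdef]
  have hγ : HasDerivAt γ v 0 := by
    have h1 : HasDerivAt (fun t : ℝ => t • v) ((1:ℝ) • v) 0 := (hasDerivAt_id 0).smul_const v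
    simpa [hγdef] using h1.const_add x
  have hcomp : HasDerivAt (fun t => g (γ t))
      ((Matrix.toEuclideanCLM (𝕜 := ℝ) (Hf x) : Vec d →L[ℝ] Vec d) v) 0 := by
    have hfd : HasFDerivAt g (Matrix.toEuclideanCLM (𝕜 := ℝ) (Hf x) : Vec d →L[ℝ] Vec d)
        (γ 0) := by rw [hγ0]; exact hH x
    exact hfd.comp_hasDerivAt 0 hγ
  have hslope := hasDerivAt_iff_tendsto_slope.mp hcomp
  have hnorm : Tendsto (fun t => ‖slope (fun t => g (γ t)) 0 t‖) (nhdsWithin 0 {(0:ℝ)}ᶜ)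
      (nhds ‖(Matrix.toEuclideanCLM (𝕜 := ℝ) (Hf x) : Vec d →L[ℝ] Vec d) v‖) :=
    hslope.norm
  have hbound : ∀ t : ℝ, t ≠ 0 → ‖slope (fun t => g (γ t)) 0 t‖ ≤ L1 * ‖v‖ := by
    intro t ht
    rw [slope_def_module]
    rw [sub_zero, norm_smul]
    have h1 : ‖g (γ t) - g (γ 0)‖ ≤ L1 * ‖γ t - γ 0‖ := hlip (γ 0) (γ t)
    have h2 : γ t - γ 0 = t • v := by simp [hγdef]
    rw [h2, norm_smul] at h1
    calc ‖t⁻¹‖ * ‖g (γ t) - g (γ 0)‖ ≤ ‖t⁻¹‖ * (L1 * (‖t‖ * ‖v‖)) :=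
          mul_le_mul_of_nonneg_left h1 (norm_nonneg _)
      _ = (‖t⁻¹‖ * ‖t‖) * (L1 * ‖v‖) := by ring
      _ = L1 * ‖v‖ := by
          rw [norm_inv, inv_mul_cancel₀ (norm_ne_zero_iff.mpr ht), one_mul]
  have hle : ‖(Matrix.toEuclideanCLM (𝕜 := ℝ) (Hf x) : Vec d →L[ℝ] Vec d) v‖ ≤ L1 * ‖v‖ := by
    refine le_of_tendsto hnorm ?_
    filter_upwards [self_mem_nhdsWithin] with t ht
    exact hbound t ht
  rw [← tCLM_apply]
  exact hle

/-- Lower bound on the Hessian quadratic form from strong monotonicity of the gradient. -/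
lemma hess_lb {g : Vec d → Vec d} {Hf : Vec d → Matrix (Fin d) (Fin d) ℝ} {m : ℝ}
    (hH : ∀ x, HasFDerivAt g (Matrix.toEuclideanCLM (𝕜 := ℝ) (Hf x) : Vec d →L[ℝ] Vec d) x)
    (hmono : ∀ x y : Vec d, m * ‖y - x‖ ^ 2 ≤ (inner ℝ (g y - g x) (y - x) : ℝ)) :
    ∀ (x v : Vec d), m * ‖v‖ ^ 2 ≤ (inner ℝ (Matrix.toEuclideanLin (Hf x) v) v : ℝ) := by
  intro x v
  set γ : ℝ → Vec d := fun t => x + t • v with hγdef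
  have hγ0 : γ 0 = x := by simp [hγdef]
  have hγ : HasDerivAt γ v 0 := by
    have h1 : HasDerivAt (fun t : ℝ => t • v) ((1:ℝ) • v) 0 := (hasDerivAt_id 0).smul_const v
    simpa [hγdef] using h1.const_add x
  have hcomp : HasDerivAt (fun t => g (γ t))
      ((Matrix.toEuclideanCLM (𝕜 := ℝ) (Hf x) : Vec d →L[ℝ] Vec d) v) 0 := by
    have hfd : HasFDerivAt g (Matrix.toEuclideanCLM (𝕜 := ℝ) (Hf x) : Vec d →L[ℝ] Vec d)
        (γ 0) := by rw [hγ0]; exact hH x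
    exact hfd.comp_hasDerivAt 0 hγ
  have hslope := hasDerivAt_iff_tendsto_slope.mp hcomp
  have hslope' : Tendsto (slope (fun t => g (γ t)) 0) (nhdsWithin 0 (Set.Ioi (0:ℝ)))
      (nhds ((Matrix.toEuclideanCLM (𝕜 := ℝ) (Hf x) : Vec d →L[ℝ] Vec d) v)) :=
    hslope.mono_left (nhdsWithin_mono 0 (fun t ht => ne_of_gt ht))
  have hinner : Tendsto (fun t => (inner ℝ (slope (fun t => g (γ t)) 0 t) v : ℝ))
      (nhdsWithin 0 (Set.Ioi (0:ℝ)))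
      (nhds (inner ℝ ((Matrix.toEuclideanCLM (𝕜 := ℝ) (Hf x) : Vec d →L[ℝ] Vec d) v) v : ℝ)) :=
    hslope'.inner tendsto_const_nhds
  have hbound : ∀ t : ℝ, 0 < t →
      m * ‖v‖ ^ 2 ≤ (inner ℝ (slope (fun t => g (γ t)) 0 t) v : ℝ) := by
    intro t ht
    rw [slope_def_module, sub_zero, real_inner_smul_left]
    have h1 := hmono (γ 0) (γ t)
    have h2 : γ t - γ 0 = t • v := by simp [hγdef]
    rw [h2, norm_smul, real_inner_smul_right] at h1
    have h3 : m * ((|t| * ‖v‖) ^ 2) ≤ t * (inner ℝ (g (γ t) - g (γ 0)) v : ℝ) := by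
      simpa [Real.norm_eq_abs] using h1
    have h4 : m * (t ^ 2 * ‖v‖ ^ 2) ≤ t * (inner ℝ (g (γ t) - g (γ 0)) v : ℝ) := by
      rw [show (|t| * ‖v‖) ^ 2 = |t| ^ 2 * ‖v‖ ^ 2 by ring, sq_abs] at h3
      exact h3
    rw [le_inv_mul_iff₀ ht]
    have h5 : t * (t * (m * ‖v‖ ^ 2)) ≤ t * (inner ℝ (g (γ t) - g (γ 0)) v : ℝ) := by
      calc t * (t * (m * ‖v‖ ^ 2)) = m * (t ^ 2 * ‖v‖ ^ 2) := by ring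
        _ ≤ t * (inner ℝ (g (γ t) - g (γ 0)) v : ℝ) := h4
    exact le_of_mul_le_mul_left h5 ht
  have hle : m * ‖v‖ ^ 2
      ≤ (inner ℝ ((Matrix.toEuclideanCLM (𝕜 := ℝ) (Hf x) : Vec d →L[ℝ] Vec d) v) v : ℝ) := by
    refine ge_of_tendsto hinner ?_
    filter_upwards [self_mem_nhdsWithin] with t ht
    exact hbound t ht
  rw [← tCLM_apply]
  exact hle

/-- Quadratic accuracy of the linear model of the gradient around the minimizer. -/
lemma grad_approx {g : Vec d → Vec d} {Hf : Vec d → Matrix (Fin d) (Fin d) ℝ} {L2 : ℝ}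
    (hH : ∀ x, HasFDerivAt g (Matrix.toEuclideanCLM (𝕜 := ℝ) (Hf x) : Vec d →L[ℝ] Vec d) x)
    (hlip : ∀ x y : Vec d, opNorm2 (Hf y - Hf x) ≤ L2 * ‖y - x‖) (hL2 : 0 ≤ L2)
    (xs : Vec d) (hgs : g xs = 0) (x : Vec d) :
    ‖g x - Matrix.toEuclideanLin (Hf xs) (x - xs)‖ ≤ L2 * ‖x - xs‖ ^ 2 := by
  set φ : Vec d → Vec d :=
    fun y => g y - (Matrix.toEuclideanCLM (𝕜 := ℝ) (Hf xs) : Vec d →L[ℝ] Vec d) y with hφ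
  set s : Set (Vec d) := Metric.closedBall xs ‖x - xs‖ with hs
  have hconv : Convex ℝ s := convex_closedBall _ _
  have hxs : xs ∈ s := Metric.mem_closedBall_self (norm_nonneg _)
  have hx : x ∈ s := by
    rw [hs, Metric.mem_closedBall, dist_eq_norm]
  have hders : ∀ y ∈ s, HasFDerivWithinAt φ
      ((Matrix.toEuclideanCLM (𝕜 := ℝ) (Hf y) : Vec d →L[ℝ] Vec d)
        - (Matrix.toEuclideanCLM (𝕜 := ℝ) (Hf xs) : Vec d →L[ℝ] Vec d)) s y := by
    intro y _
    exact ((hH y).sub ((Matrix.toEuclideanCLM (𝕜 := ℝ)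
      (Hf xs) : Vec d →L[ℝ] Vec d).hasFDerivAt)).hasFDerivWithinAt
  have hbound : ∀ y ∈ s, ‖(Matrix.toEuclideanCLM (𝕜 := ℝ) (Hf y) : Vec d →L[ℝ] Vec d)
      - (Matrix.toEuclideanCLM (𝕜 := ℝ) (Hf xs) : Vec d →L[ℝ] Vec d)‖ ≤ L2 * ‖x - xs‖ := by
    intro y hy
    have h1 : (Matrix.toEuclideanCLM (𝕜 := ℝ) (Hf y) : Vec d →L[ℝ] Vec d)
        - (Matrix.toEuclideanCLM (𝕜 := ℝ) (Hf xs) : Vec d →L[ℝ] Vec d)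
        = (Matrix.toEuclideanCLM (𝕜 := ℝ) (Hf y - Hf xs) : Vec d →L[ℝ] Vec d) := by
      rw [_root_.map_sub]
    rw [h1]
    have h2 : ‖(Matrix.toEuclideanCLM (𝕜 := ℝ) (Hf y - Hf xs) : Vec d →L[ℝ] Vec d)‖
        = opNorm2 (Hf y - Hf xs) := rfl
    rw [h2]
    calc opNorm2 (Hf y - Hf xs) ≤ L2 * ‖y - xs‖ := hlip xs y
      _ ≤ L2 * ‖x - xs‖ := by
          apply mul_le_mul_of_nonneg_left _ hL2
          rw [hs, Metric.mem_closedBall, dist_eq_norm] at hy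
          exact hy
  have hmv := hconv.norm_image_sub_le_of_norm_hasFDerivWithin_le hders hbound hxs hx
  have hphi : φ x - φ xs = g x - Matrix.toEuclideanLin (Hf xs) (x - xs) := by
    rw [hφ]
    simp only []
    rw [← tCLM_apply, _root_.map_sub, hgs]
    abel
  calc ‖g x - Matrix.toEuclideanLin (Hf xs) (x - xs)‖ = ‖φ x - φ xs‖ := by rw [hphi]
    _ ≤ L2 * ‖x - xs‖ * ‖x - xs‖ := hmv
    _ = L2 * ‖x - xs‖ ^ 2 := by ring

/-! ### Measurability lemmas -/

instance matrixBorelSpace {m n : ℕ} : BorelSpace (Matrix (Fin m) (Fin n) ℝ) := Pi.borelSpace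

instance matrixSecondCountable {m n : ℕ} :
    SecondCountableTopology (Matrix (Fin m) (Fin n) ℝ) := by
  show SecondCountableTopology (Fin m → Fin n → ℝ); infer_instance

section Meas

variable {Ω : Type*} [MeasurableSpace Ω]

lemma measurable_entry {m n : ℕ} {B : Ω → Matrix (Fin m) (Fin n) ℝ} (hB : Measurable B)
    (i : Fin m) (j : Fin n) : Measurable fun ω => B ω i j :=
  (measurable_pi_apply j).comp ((measurable_pi_apply i).comp hB)

lemma measurable_of_entries {m n : ℕ} {B : Ω → Matrix (Fin m) (Fin n) ℝ}
    (h : ∀ i j, Measurable fun ω => B ω i j) : Measurable B :=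
  measurable_pi_lambda _ fun i => measurable_pi_lambda _ fun j => h i j

lemma measurable_matrix_mul {a b c : ℕ} {A : Ω → Matrix (Fin a) (Fin b) ℝ}
    {B : Ω → Matrix (Fin b) (Fin c) ℝ} (hA : Measurable A) (hB : Measurable B) :
    Measurable fun ω => A ω * B ω := by
  refine measurable_of_entries fun i j => ?_
  simp only [Matrix.mul_apply]
  exact Finset.measurable_sum _ fun k _ => (measurable_entry hA i k).mul (measurable_entry hB k j)

lemma measurable_matrix_transpose {a b : ℕ} {A : Ω → Matrix (Fin a) (Fin b) ℝ}
    (hA : Measurable A) : Measurable fun ω => (A ω)ᵀ :=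
  measurable_of_entries fun i j => measurable_entry hA j i

lemma measurable_matrix_sub {a b : ℕ} {A B : Ω → Matrix (Fin a) (Fin b) ℝ}
    (hA : Measurable A) (hB : Measurable B) : Measurable fun ω => A ω - B ω := by
  refine measurable_of_entries fun i j => ?_
  have h : ∀ ω, (A ω - B ω) i j = A ω i j - B ω i j := fun ω => rfl
  simp_rw [h]
  exact (measurable_entry hA i j).sub (measurable_entry hB i j)

lemma measurable_matrix_add {a b : ℕ} {A B : Ω → Matrix (Fin a) (Fin b) ℝ}
    (hA : Measurable A) (hB : Measurable B) : Measurable fun ω => A ω + B ω := by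
  refine measurable_of_entries fun i j => ?_
  have h : ∀ ω, (A ω + B ω) i j = A ω i j + B ω i j := fun ω => rfl
  simp_rw [h]
  exact (measurable_entry hA i j).add (measurable_entry hB i j)

lemma measurable_matrix_smul {a b : ℕ} {r : Ω → ℝ} {A : Ω → Matrix (Fin a) (Fin b) ℝ}
    (hr : Measurable r) (hA : Measurable A) : Measurable fun ω => r ω • A ω := by
  refine measurable_of_entries fun i j => ?_
  have h : ∀ ω, (r ω • A ω) i j = r ω * A ω i j := fun ω => rfl
  simp_rw [h]
  exact hr.mul (measurable_entry hA i j)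

lemma measurable_matrix_inv {a : ℕ} {A : Ω → Matrix (Fin a) (Fin a) ℝ} (hA : Measurable A) :
    Measurable fun ω => (A ω)⁻¹ := by
  have h : ∀ ω, (A ω)⁻¹ = ((A ω).det)⁻¹ • (A ω).adjugate := by
    intro ω
    rw [Matrix.inv_def, Ring.inverse_eq_inv']
  simp_rw [h]
  have hdet : Measurable fun ω => ((A ω).det)⁻¹ :=
    ((continuous_id.matrix_det.measurable).comp hA).inv
  have hadj : Measurable fun ω => (A ω).adjugate :=
    (continuous_id.matrix_adjugate.measurable).comp hA
  exact measurable_matrix_smul hdet hadj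

lemma measurable_vec_coord {e : ℕ} {v : Ω → Vec e} (hv : Measurable v) (i : Fin e) :
    Measurable fun ω => v ω i :=
  ((EuclideanSpace.proj i).continuous.measurable).comp hv

lemma measurable_vec_of_coords {e : ℕ} {v : Ω → Vec e} (h : ∀ i, Measurable fun ω => v ω i) :
    Measurable v := by
  have heq : v = fun ω => (WithLp.equiv 2 (Fin e → ℝ)).symm (fun i => v ω i) := rfl
  rw [heq]
  exact ((PiLp.continuous_toLp _ _).measurable).comp (measurable_pi_lambda _ h)

lemma measurable_tELapp {e : ℕ} {B : Ω → Matrix (Fin e) (Fin e) ℝ} {v : Ω → Vec e}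
    (hB : Measurable B) (hv : Measurable v) :
    Measurable fun ω => Matrix.toEuclideanLin (B ω) (v ω) := by
  refine measurable_vec_of_coords fun i => ?_
  have h : ∀ ω, (Matrix.toEuclideanLin (B ω) (v ω)) i = ∑ j, B ω i j * v ω j := by
    intro ω; rfl
  simp_rw [h]
  exact Finset.measurable_sum _ fun j _ => (measurable_entry hB i j).mul (measurable_vec_coord hv j)

lemma measurable_vec_sub {e : ℕ} {u v : Ω → Vec e} (hu : Measurable u) (hv : Measurable v) :
    Measurable fun ω => u ω - v ω := by
  refine measurable_vec_of_coords fun i => ?_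
  have h : ∀ ω, (u ω - v ω) i = u ω i - v ω i := fun ω => rfl
  simp_rw [h]
  exact (measurable_vec_coord hu i).sub (measurable_vec_coord hv i)

lemma measurable_wFrob {e : ℕ} (H : Matrix (Fin e) (Fin e) ℝ) {B : Ω → Matrix (Fin e) (Fin e) ℝ}
    (hB : Measurable B) : Measurable fun ω => wFrob H (B ω) := by
  have h : ∀ ω, wFrob H (B ω)
      = Real.sqrt (Matrix.trace ((msqrt H * B ω * msqrt H)ᵀ * (msqrt H * B ω * msqrt H))) := by
    intro ω; rfl
  simp_rw [h]
  have hM : Measurable fun ω => msqrt H * B ω * msqrt H :=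
    measurable_matrix_mul (measurable_matrix_mul measurable_const hB) measurable_const
  have htr : Measurable fun ω =>
      Matrix.trace ((msqrt H * B ω * msqrt H)ᵀ * (msqrt H * B ω * msqrt H)) := by
    have := measurable_matrix_mul (measurable_matrix_transpose hM) hM
    exact (continuous_id.matrix_trace.measurable).comp this
  exact Real.continuous_sqrt.measurable.comp htr

/-- Measurability of the Hessian map. -/
lemma measurable_Hf {e : ℕ} {g : Vec e → Vec e} {Hf : Vec e → Matrix (Fin e) (Fin e) ℝ}
    (hH : ∀ x, HasFDerivAt g (Matrix.toEuclideanCLM (𝕜 := ℝ) (Hf x) : Vec e →L[ℝ] Vec e) x) :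
    Measurable Hf := by
  refine measurable_of_entries fun i j => ?_
  have h : ∀ x, Hf x i j = (fderiv ℝ g x (EuclideanSpace.single j 1)) i := by
    intro x
    rw [(hH x).fderiv, tCLM_apply]
    have h1 : (WithLp.equiv 2 (Fin e → ℝ)) (EuclideanSpace.single j (1:ℝ)) = Pi.single j 1 := rfl
    show Hf x i j = ((Hf x).mulVec ((WithLp.equiv 2 _) (EuclideanSpace.single j (1:ℝ)))) i
    rw [h1, Matrix.mulVec_single]
    simp
  simp_rw [h]
  exact (measurable_vec_coord (measurable_fderiv_apply_const ℝ g (EuclideanSpace.single j 1)) i)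

end Meas

/-! ### Deterministic per-step lemmas -/

/-- The key one-step progress bound for the quasi-Newton step. -/
lemma one_step_bound {L1 L2 mu : ℝ} (hL1 : 0 < L1) (hmu : 0 < mu) (hL2pos : 0 ≤ L2)
    (f : Vec d → ℝ) (g : Vec d → Vec d) (Hs B : Matrix (Fin d) (Fin d) ℝ)
    (xs x : Vec d)
    (hHsinv : Hs⁻¹ * Hs = 1)
    (hub : ∀ v : Vec d, ‖Matrix.toEuclideanLin Hs v‖ ≤ L1 * ‖v‖)
    (happr : ‖g x - Matrix.toEuclideanLin Hs (x - xs)‖ ≤ L2 * ‖x - xs‖ ^ 2)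
    (hquad : ∀ y, f y - f xs ≤ L1 * ‖y - xs‖ ^ 2)
    (hdist : mu * ‖x - xs‖ ^ 2 ≤ 2 * (f x - f xs)) :
    f (x - Matrix.toEuclideanLin B (g x)) - f xs
      ≤ (2 * L1 / mu) * (L1 * opNorm2 (B - Hs⁻¹) + opNorm2 B * (L2 * ‖x - xs‖)) ^ 2
          * (f x - f xs) := by
  set u := x - xs with hu
  set r := g x - Matrix.toEuclideanLin Hs u with hr
  set E := L1 * opNorm2 (B - Hs⁻¹) + opNorm2 B * (L2 * ‖u‖) with hE
  have hEnn : 0 ≤ E := by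
    apply add_nonneg
    · exact mul_nonneg hL1.le (opNorm2_nonneg _)
    · exact mul_nonneg (opNorm2_nonneg _) (mul_nonneg hL2pos (norm_nonneg _))
  have hδnn : 0 ≤ f x - f xs := by nlinarith [norm_nonneg u, sq_nonneg ‖u‖]
  -- decompose the error
  have hgx : g x = Matrix.toEuclideanLin Hs u + r := by rw [hr]; abel
  have hx' : (x - Matrix.toEuclideanLin B (g x)) - xs
      = Matrix.toEuclideanLin ((Hs⁻¹ - B) * Hs) u - Matrix.toEuclideanLin B r := by
    have h1 : (x - Matrix.toEuclideanLin B (g x)) - xs = u - Matrix.toEuclideanLin B (g x) := by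
      rw [hu]; abel
    rw [h1, hgx, _root_.map_add]
    have h2 : Matrix.toEuclideanLin B (Matrix.toEuclideanLin Hs u)
        = Matrix.toEuclideanLin (B * Hs) u := (tEL_mul_apply B Hs u).symm
    have h3 : (Hs⁻¹ - B) * Hs = 1 - B * Hs := by rw [Matrix.sub_mul, hHsinv]
    rw [h2, h3, tEL_sub_apply, tEL_one]
    abel
  have hnorm : ‖(x - Matrix.toEuclideanLin B (g x)) - xs‖ ≤ E * ‖u‖ := by
    rw [hx']
    calc ‖Matrix.toEuclideanLin ((Hs⁻¹ - B) * Hs) u - Matrix.toEuclideanLin B r‖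
        ≤ ‖Matrix.toEuclideanLin ((Hs⁻¹ - B) * Hs) u‖ + ‖Matrix.toEuclideanLin B r‖ :=
          norm_sub_le _ _
      _ ≤ opNorm2 (B - Hs⁻¹) * (L1 * ‖u‖) + opNorm2 B * (L2 * ‖u‖ ^ 2) := by
          apply add_le_add
          · rw [tEL_mul_apply]
            calc ‖Matrix.toEuclideanLin (Hs⁻¹ - B) (Matrix.toEuclideanLin Hs u)‖
                ≤ opNorm2 (Hs⁻¹ - B) * ‖Matrix.toEuclideanLin Hs u‖ := norm_tEL_le _ _
              _ ≤ opNorm2 (Hs⁻¹ - B) * (L1 * ‖u‖) :=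
                  mul_le_mul_of_nonneg_left (hub u) (opNorm2_nonneg _)
              _ = opNorm2 (B - Hs⁻¹) * (L1 * ‖u‖) := by rw [opNorm2_sub_comm]
          · calc ‖Matrix.toEuclideanLin B r‖ ≤ opNorm2 B * ‖r‖ := norm_tEL_le _ _
              _ ≤ opNorm2 B * (L2 * ‖u‖ ^ 2) :=
                  mul_le_mul_of_nonneg_left happr (opNorm2_nonneg _)
      _ = E * ‖u‖ := by rw [hE]; ring
  have hsq : ‖(x - Matrix.toEuclideanLin B (g x)) - xs‖ ^ 2 ≤ E ^ 2 * ‖u‖ ^ 2 := by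
    rw [show E ^ 2 * ‖u‖ ^ 2 = (E * ‖u‖) ^ 2 by ring]
    exact pow_le_pow_left₀ (norm_nonneg _) hnorm 2
  calc f (x - Matrix.toEuclideanLin B (g x)) - f xs
      ≤ L1 * ‖(x - Matrix.toEuclideanLin B (g x)) - xs‖ ^ 2 := hquad _
    _ ≤ L1 * (E ^ 2 * ‖u‖ ^ 2) := mul_le_mul_of_nonneg_left hsq hL1.le
    _ ≤ L1 * (E ^ 2 * (2 / mu * (f x - f xs))) := by
        apply mul_le_mul_of_nonneg_left _ hL1.le
        apply mul_le_mul_of_nonneg_left _ (sq_nonneg E)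
        rw [div_mul_eq_mul_div, le_div_iff₀ hmu]
        calc ‖u‖ ^ 2 * mu = mu * ‖u‖ ^ 2 := by ring
          _ ≤ 2 * (f x - f xs) := hdist
    _ = (2 * L1 / mu) * E ^ 2 * (f x - f xs) := by ring

/-- Superlinear convergence of the ratio from a vanishing contraction factor. -/
lemma ratio_tendsto_zero {δ c : ℕ → ℝ} (hδ : ∀ k, 0 ≤ δ k)
    (hc0 : Filter.Tendsto c Filter.atTop (nhds 0)) (hcnn : ∀ k, 0 ≤ c k)
    (hkey : ∀ k, c k ≤ 1 → δ (k + 1) ≤ (c k) ^ 2 * δ k) :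
    Filter.Tendsto (fun k => Real.sqrt (δ (k + 1) / δ k)) Filter.atTop (nhds 0) := by
  rw [Metric.tendsto_atTop] at hc0 ⊢
  intro ε hε
  obtain ⟨N, hN⟩ := hc0 (min ε 1) (lt_min hε one_pos)
  refine ⟨N, fun k hk => ?_⟩
  have hck : c k < min ε 1 := by
    have := hN k hk
    rw [Real.dist_eq, sub_zero, abs_of_nonneg (hcnn k)] at this
    exact this
  have hck1 : c k ≤ 1 := le_of_lt (lt_of_lt_of_le hck (min_le_right _ _))
  have hstep := hkey k hck1
  rw [Real.dist_eq, sub_zero, abs_of_nonneg (Real.sqrt_nonneg _)]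
  rcases eq_or_lt_of_le (hδ k) with h0 | h0
  · have hzero : δ (k + 1) = 0 := by
      have h1 : δ (k + 1) ≤ 0 := by
        calc δ (k + 1) ≤ (c k) ^ 2 * δ k := hstep
          _ = 0 := by rw [← h0, mul_zero]
      exact le_antisymm h1 (hδ (k + 1))
    rw [hzero, ← h0, div_zero, Real.sqrt_zero]
    exact hε
  · have hq : δ (k + 1) / δ k ≤ (c k) ^ 2 := by
      rw [div_le_iff₀ h0]
      exact hstep
    calc Real.sqrt (δ (k + 1) / δ k) ≤ Real.sqrt ((c k) ^ 2) := Real.sqrt_le_sqrt hq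
      _ = c k := Real.sqrt_sq (hcnn k)
      _ < ε := lt_of_lt_of_le hck (min_le_left _ _)

end Aux

set_option maxHeartbeats 1000000

/-- **Almost sure superlinear decrease of the ratio of function values (Lemma A.10).** -/
theorem function_value_ratio_tendsto_zero
    {d τ : ℕ} {Ω : Type*} [MeasurableSpace Ω] (μ : Measure Ω) [IsProbabilityMeasure μ]
    (f : Vec d → ℝ) (g : Vec d → Vec d) (Hf : Vec d → Matrix (Fin d) (Fin d) ℝ)
    (hfgH : IsGradHess f g Hf)
    (mu L1 L2 : ℝ) (hmu : 0 < mu) (hL1 : 0 < L1) (hL2 : 0 < L2)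
    (hstrconv : ∀ x y : Vec d, f x + (inner ℝ (g x) (y - x) : ℝ) + mu / 2 * ‖y - x‖ ^ 2 ≤ f y)
    (hlipgrad : ∀ x y : Vec d, ‖g y - g x‖ ≤ L1 * ‖y - x‖)
    (hliphess : ∀ x y : Vec d, opNorm2 (Hf y - Hf x) ≤ L2 * ‖y - x‖)
    (xstar : Vec d) (hmin : ∀ x, f xstar ≤ f x)
    (S : ℕ → Ω → Matrix (Fin d) (Fin τ) ℝ) (hiid : IIDSketch μ S)
    (hrank : ∀ k ω, (S k ω).rank = τ)
    (x0 : Vec d) (B0 : Matrix (Fin d) (Fin d) ℝ) (hB0symm : B0.IsSymm)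
    (X : ℕ → Ω → Vec d) (Bm : ℕ → Ω → Matrix (Fin d) (Fin d) ℝ)
    (hX0 : ∀ ω, X 0 ω = x0) (hB0 : ∀ ω, Bm 0 ω = B0)
    (hXstep : ∀ k ω, X (k+1) ω =
      if f (X k ω - Matrix.toEuclideanLin (Bm k ω) (g (X k ω))) ≤ f (X k ω) then
        X k ω - Matrix.toEuclideanLin (Bm k ω) (g (X k ω))
      else X k ω)
    (hBstep : ∀ k ω, Bm (k+1) ω = bfgsUpdate (Bm k ω) (Hf (X k ω)) (S k ω))
    (ρ : ℝ) (hρpos : 0 < ρ) (hρ1 : ρ ≤ 1)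
    (Ψ : ℕ → Ω → ℝ)
    (hΨ : ∀ k ω, Ψ k ω = Real.sqrt (f (X k ω) - f xstar) +
      4 * Real.sqrt 2 * L1 ^ ((5 : ℝ) / 2) / (mu * L2 * ρ) *
        wFrob (Hf xstar) (Bm k ω - (Hf xstar)⁻¹) ^ 2)
    (hcontr : ∀ k, ∫ ω, Ψ (k + 1) ω ∂μ ≤ (1 - ρ / 2) * ∫ ω, Ψ k ω ∂μ) :
    ∀ᵐ ω ∂μ,
      Tendsto (fun k =>
        Real.sqrt ((f (X (k + 1) ω) - f xstar) / (f (X k ω) - f xstar))) atTop (nhds 0) := by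
  classical
  obtain ⟨hg, hHd⟩ := hfgH
  -- continuity of f and g
  have hfc : Continuous f :=
    continuous_iff_continuousAt.mpr fun x => (hg x).differentiableAt.continuousAt
  have hgc : Continuous g :=
    continuous_iff_continuousAt.mpr fun x => (hHd x).differentiableAt.continuousAt
  -- gradient vanishes at the minimizer
  have hgstar : g xstar = 0 := by
    have hloc : IsLocalMin f xstar := Filter.Eventually.of_forall fun x => hmin x
    have hfd := (hasGradientAt_iff_hasFDerivAt).mp (hg xstar)
    have hz := hloc.hasFDerivAt_eq_zero hfd
    have happ := congrFun (congrArg (fun (T : Vec d →L[ℝ] ℝ) => (T : Vec d → ℝ)) hz) (g xstar)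
    have : (inner ℝ (g xstar) (g xstar) : ℝ) = 0 := by
      simpa [InnerProductSpace.toDual_apply_apply] using happ
    exact inner_self_eq_zero.mp this
  -- strong monotonicity of the gradient
  have hmono : ∀ x y : Vec d, mu * ‖y - x‖ ^ 2 ≤ (inner ℝ (g y - g x) (y - x) : ℝ) := by
    intro x y
    have h1 := hstrconv x y
    have h2 := hstrconv y x
    rw [inner_sub_left]
    have h3 : (inner ℝ (g y) (x - y) : ℝ) = -(inner ℝ (g y) (y - x) : ℝ) := by
      rw [show x - y = -(y - x) by abel, inner_neg_right]
    rw [h3] at h2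
    have h4 : ‖x - y‖ = ‖y - x‖ := norm_sub_rev _ _
    rw [h4] at h2
    linarith
  -- Hessian facts
  have hsymm : ∀ x, (Hf x)ᵀ = Hf x := hess_symm hg hHd
  have hlbH : ∀ (x v : Vec d), mu * ‖v‖ ^ 2
      ≤ (inner ℝ (Matrix.toEuclideanLin (Hf x) v) v : ℝ) := hess_lb hHd hmono
  have hubH : ∀ (x v : Vec d), ‖Matrix.toEuclideanLin (Hf x) v‖ ≤ L1 * ‖v‖ :=
    hess_ub hHd hlipgrad hL1.le
  have hubHin : ∀ (x v : Vec d), (inner ℝ (Matrix.toEuclideanLin (Hf x) v) v : ℝ)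
      ≤ L1 * ‖v‖ ^ 2 := by
    intro x v
    calc (inner ℝ (Matrix.toEuclideanLin (Hf x) v) v : ℝ)
        ≤ ‖Matrix.toEuclideanLin (Hf x) v‖ * ‖v‖ := real_inner_le_norm _ _
      _ ≤ (L1 * ‖v‖) * ‖v‖ := mul_le_mul_of_nonneg_right (hubH x v) (norm_nonneg _)
      _ = L1 * ‖v‖ ^ 2 := by ring
  have hPD : ∀ x, (Hf x).PosDef := fun x => posDef_of_lb hmu (hsymm x) (hlbH x)
  have hlbdot : ∀ (x : Vec d) (w : Fin d → ℝ),
      mu * dotProduct w w ≤ dotProduct w ((Hf x).mulVec w) := by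
    intro x w
    set v : Vec d := (WithLp.equiv 2 (Fin d → ℝ)).symm w with hv
    have h1 : dotProduct w ((Hf x).mulVec w)
        = (inner ℝ (Matrix.toEuclideanLin (Hf x) v) v : ℝ) := by
      rw [inner_tEL, dotProduct_comm]
      rfl
    rw [h1, dot_self_eq w]
    exact hlbH x v
  have hopH : ∀ x, opNorm2 (Hf x) ≤ L1 := fun x => opNorm2_le_bound hL1.le (hubH x)
  set Hs := Hf xstar with hHs
  have hPDs : Hs.PosDef := hPD xstar
  have hdetHs : IsUnit Hs.det := isUnit_iff_ne_zero.mpr (ne_of_gt hPDs.det_pos)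
  have hinvmul : Hs⁻¹ * Hs = 1 := Matrix.nonsing_inv_mul _ hdetHs
  -- strong convexity consequences
  have hdist : ∀ x : Vec d, mu * ‖x - xstar‖ ^ 2 ≤ 2 * (f x - f xstar) := by
    intro x
    have h1 := hstrconv xstar x
    rw [hgstar, inner_zero_left] at h1
    linarith
  have hquad : ∀ y : Vec d, f y - f xstar ≤ L1 * ‖y - xstar‖ ^ 2 := by
    intro y
    have h1 := hstrconv y xstar
    have h2 : (inner ℝ (g y) (xstar - y) : ℝ) = -(inner ℝ (g y) (y - xstar) : ℝ) := by
      rw [show xstar - y = -(y - xstar) by abel, inner_neg_right]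
    rw [h2] at h1
    have h3 : (inner ℝ (g y) (y - xstar) : ℝ) ≤ L1 * ‖y - xstar‖ ^ 2 := by
      calc (inner ℝ (g y) (y - xstar) : ℝ) ≤ ‖g y‖ * ‖y - xstar‖ := real_inner_le_norm _ _
        _ ≤ (L1 * ‖y - xstar‖) * ‖y - xstar‖ := by
            apply mul_le_mul_of_nonneg_right _ (norm_nonneg _)
            have := hlipgrad xstar y
            rwa [hgstar, sub_zero] at this
        _ = L1 * ‖y - xstar‖ ^ 2 := by ring
    nlinarith [sq_nonneg ‖xstar - y‖, norm_nonneg (xstar - y)]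
  have happrox : ∀ x : Vec d, ‖g x - Matrix.toEuclideanLin Hs (x - xstar)‖
      ≤ L2 * ‖x - xstar‖ ^ 2 := fun x => grad_approx hHd hliphess hL2.le xstar hgstar x
  -- measurability of the iterates
  have hXB : ∀ k, Measurable (X k) ∧ Measurable (Bm k) := by
    intro k
    induction k with
    | zero =>
      constructor
      · have h : X 0 = fun _ => x0 := funext hX0
        rw [h]; exact measurable_const
      · have h : Bm 0 = fun _ => B0 := funext hB0
        rw [h]; exact measurable_const
    | succ k ih =>
      obtain ⟨hXk, hBk⟩ := ih
      have hgX : Measurable fun ω => g (X k ω) := hgc.measurable.comp hXk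
      have hT : Measurable fun ω => X k ω - Matrix.toEuclideanLin (Bm k ω) (g (X k ω)) :=
        measurable_vec_sub hXk (measurable_tELapp hBk hgX)
      have hXk1 : Measurable (X (k + 1)) := by
        have h : X (k + 1) = fun ω =>
            if f (X k ω - Matrix.toEuclideanLin (Bm k ω) (g (X k ω))) ≤ f (X k ω) then
              X k ω - Matrix.toEuclideanLin (Bm k ω) (g (X k ω))
            else X k ω := funext (hXstep k)
        rw [h]
        exact Measurable.ite
          (measurableSet_le (hfc.measurable.comp hT) (hfc.measurable.comp hXk)) hT hXk
      refine ⟨hXk1, ?_⟩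
      have hHk : Measurable fun ω => Hf (X k ω) := (measurable_Hf hHd).comp hXk
      have hSk : Measurable (S k) := hiid.1 k
      have hSkT : Measurable fun ω => (S k ω)ᵀ := measurable_matrix_transpose hSk
      have hG : Measurable fun ω =>
          S k ω * ((S k ω)ᵀ * Hf (X k ω) * S k ω)⁻¹ * (S k ω)ᵀ := by
        apply measurable_matrix_mul (measurable_matrix_mul hSk _) hSkT
        exact measurable_matrix_inv (measurable_matrix_mul (measurable_matrix_mul hSkT hHk) hSk)
      have h : Bm (k + 1) = fun ω => bfgsUpdate (Bm k ω) (Hf (X k ω)) (S k ω) :=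
        funext (hBstep k)
      rw [h]
      unfold bfgsUpdate
      apply measurable_matrix_add hG
      apply measurable_matrix_mul (measurable_matrix_mul _ hBk) _
      · exact measurable_matrix_sub measurable_const (measurable_matrix_mul hG hHk)
      · exact measurable_matrix_sub measurable_const (measurable_matrix_mul hHk hG)
  -- monotonicity of function values
  have hmonof : ∀ k ω, f (X (k + 1) ω) ≤ f (X k ω) := by
    intro k ω
    rw [hXstep k ω]
    split_ifs with h
    · exact h
    · exact le_rfl
  have hfle : ∀ k ω, f (X k ω) ≤ f x0 := by
    intro k
    induction k with
    | zero => intro ω; rw [hX0 ω]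
    | succ k ih => intro ω; exact (hmonof k ω).trans (ih ω)
  -- uniform (deterministic) bound on the matrices
  have hBbound : ∀ k, ∃ C : ℝ, 0 ≤ C ∧ ∀ ω, opNorm2 (Bm k ω) ≤ C := by
    intro k
    induction k with
    | zero =>
      exact ⟨opNorm2 B0, opNorm2_nonneg _, fun ω => by rw [hB0 ω]⟩
    | succ k ih =>
      obtain ⟨C, hC0, hC⟩ := ih
      refine ⟨mu⁻¹ + (1 + mu⁻¹ * L1) ^ 2 * C, ?_, ?_⟩
      · have : (0:ℝ) ≤ mu⁻¹ := inv_nonneg.mpr hmu.le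
        positivity
      · intro ω
        rw [hBstep k ω]
        calc opNorm2 (bfgsUpdate (Bm k ω) (Hf (X k ω)) (S k ω))
            ≤ mu⁻¹ + (1 + mu⁻¹ * L1) ^ 2 * opNorm2 (Bm k ω) :=
              opNorm2_bfgsUpdate_le hmu hL1.le (hsymm _) (hlbdot _) (hopH _) (S k ω)
          _ ≤ mu⁻¹ + (1 + mu⁻¹ * L1) ^ 2 * C := by
              apply add_le_add_right
              exact mul_le_mul_of_nonneg_left (hC ω) (sq_nonneg _)
  -- the Lyapunov constant
  set β : ℝ := 4 * Real.sqrt 2 * L1 ^ ((5 : ℝ) / 2) / (mu * L2 * ρ) with hβdef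
  have hβ : 0 < β := by
    apply div_pos
    · have h1 : (0:ℝ) < Real.sqrt 2 := Real.sqrt_pos.mpr (by norm_num)
      have h2 : (0:ℝ) < L1 ^ ((5 : ℝ) / 2) := Real.rpow_pos_of_pos hL1 _
      positivity
    · positivity
  -- nonnegativity of the Lyapunov function
  have hΨnn : ∀ k ω, 0 ≤ Ψ k ω := by
    intro k ω
    rw [hΨ k ω]
    exact add_nonneg (Real.sqrt_nonneg _) (mul_nonneg hβ.le (sq_nonneg _))
  -- measurability of the Lyapunov function
  have hmeasΨ : ∀ k, Measurable (Ψ k) := by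
    intro k
    have h : Ψ k = fun ω => Real.sqrt (f (X k ω) - f xstar) +
        4 * Real.sqrt 2 * L1 ^ ((5 : ℝ) / 2) / (mu * L2 * ρ) *
          wFrob (Hf xstar) (Bm k ω - (Hf xstar)⁻¹) ^ 2 := funext (hΨ k)
    rw [h]
    obtain ⟨hXk, hBk⟩ := hXB k
    apply Measurable.add
    · exact Real.continuous_sqrt.measurable.comp ((hfc.measurable.comp hXk).sub measurable_const)
    · apply Measurable.const_mul
      exact (measurable_wFrob (Hf xstar) (measurable_matrix_sub hBk measurable_const)).pow
        measurable_const
  -- boundedness of the Lyapunov function, hence integrability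
  have hintΨ : ∀ k, Integrable (Ψ k) μ := by
    intro k
    obtain ⟨C, hC0, hC⟩ := hBbound k
    set D := Real.sqrt (f x0 - f xstar)
      + β * ((d : ℝ) * (L1 * (C + opNorm2 Hs⁻¹))) ^ 2 with hD
    have hbd : ∀ ω, ‖Ψ k ω‖ ≤ D := by
      intro ω
      rw [Real.norm_eq_abs, abs_of_nonneg (hΨnn k ω), hΨ k ω, hD]
      apply add_le_add
      · exact Real.sqrt_le_sqrt (by linarith [hfle k ω])
      · apply mul_le_mul_of_nonneg_left _ hβ.le
        have h1 : wFrob (Hf xstar) (Bm k ω - (Hf xstar)⁻¹)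
            ≤ (d : ℝ) * (L1 * (C + opNorm2 Hs⁻¹)) := by
          calc wFrob (Hf xstar) (Bm k ω - (Hf xstar)⁻¹)
              ≤ (d : ℝ) * (L1 * opNorm2 (Bm k ω - (Hf xstar)⁻¹)) :=
                wFrob_le_opNorm2 hL1.le hPDs.posSemidef (hubHin xstar) _
            _ ≤ (d : ℝ) * (L1 * (C + opNorm2 Hs⁻¹)) := by
                apply mul_le_mul_of_nonneg_left _ (Nat.cast_nonneg d)
                apply mul_le_mul_of_nonneg_left _ hL1.le
                calc opNorm2 (Bm k ω - (Hf xstar)⁻¹)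
                    ≤ opNorm2 (Bm k ω) + opNorm2 (Hf xstar)⁻¹ := opNorm2_sub_le _ _
                  _ ≤ C + opNorm2 Hs⁻¹ := add_le_add_left (hC ω) _
        calc wFrob (Hf xstar) (Bm k ω - (Hf xstar)⁻¹) ^ 2
            ≤ ((d : ℝ) * (L1 * (C + opNorm2 Hs⁻¹))) ^ 2 :=
              pow_le_pow_left₀ (wFrob_nonneg _ _) h1 2
          _ = ((d : ℝ) * (L1 * (C + opNorm2 Hs⁻¹))) ^ 2 := rfl
    exact (integrable_const D).mono' (hmeasΨ k).aestronglyMeasurable (ae_of_all μ hbd)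
  -- value of the initial Lyapunov function
  set ψ0 : ℝ := Real.sqrt (f x0 - f xstar) + β * wFrob (Hf xstar) (B0 - (Hf xstar)⁻¹) ^ 2
    with hψ0
  have hΨ0 : ∀ ω, Ψ 0 ω = ψ0 := by
    intro ω
    rw [hΨ 0 ω, hX0 ω, hB0 ω]
  have hψ0nn : 0 ≤ ψ0 :=
    add_nonneg (Real.sqrt_nonneg _) (mul_nonneg hβ.le (sq_nonneg _))
  -- contraction of expected Lyapunov values
  set q : ℝ := 1 - ρ / 2 with hqdef
  have hq0 : 0 ≤ q := by rw [hqdef]; linarith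
  have hq1 : q < 1 := by rw [hqdef]; linarith
  have hIk : ∀ k, ∫ ω, Ψ k ω ∂μ ≤ q ^ k * ψ0 := by
    intro k
    induction k with
    | zero =>
      have h0 : ∫ ω, Ψ 0 ω ∂μ = ψ0 := by
        rw [integral_congr_ae (ae_of_all μ hΨ0)]
        simp [integral_const]
      rw [h0, pow_zero, one_mul]
    | succ k ih =>
      calc ∫ ω, Ψ (k + 1) ω ∂μ ≤ q * ∫ ω, Ψ k ω ∂μ := hcontr k
        _ ≤ q * (q ^ k * ψ0) := mul_le_mul_of_nonneg_left ih hq0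
        _ = q ^ (k + 1) * ψ0 := by ring
  -- summability in `ℝ≥0∞`
  have hlintEq : ∀ k, (∫⁻ ω, ENNReal.ofReal (Ψ k ω) ∂μ) = ENNReal.ofReal (∫ ω, Ψ k ω ∂μ) :=
    fun k => (MeasureTheory.ofReal_integral_eq_lintegral_ofReal (hintΨ k)
      (ae_of_all μ (hΨnn k))).symm
  have htsum : (∑' k, ∫⁻ ω, ENNReal.ofReal (Ψ k ω) ∂μ) ≠ ⊤ := by
    have hle : ∀ k, (∫⁻ ω, ENNReal.ofReal (Ψ k ω) ∂μ)
        ≤ ENNReal.ofReal q ^ k * ENNReal.ofReal ψ0 := by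
      intro k
      rw [hlintEq k]
      calc ENNReal.ofReal (∫ ω, Ψ k ω ∂μ) ≤ ENNReal.ofReal (q ^ k * ψ0) :=
            ENNReal.ofReal_le_ofReal (hIk k)
        _ = ENNReal.ofReal (q ^ k) * ENNReal.ofReal ψ0 :=
            ENNReal.ofReal_mul (pow_nonneg hq0 k)
        _ = ENNReal.ofReal q ^ k * ENNReal.ofReal ψ0 := by rw [ENNReal.ofReal_pow hq0]
    have hgeo : (∑' k : ℕ, ENNReal.ofReal q ^ k * ENNReal.ofReal ψ0) ≠ ⊤ := by
      rw [ENNReal.tsum_mul_right]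
      apply ENNReal.mul_ne_top
      · rw [ENNReal.tsum_geometric]
        refine ENNReal.inv_ne_top.mpr ?_
        intro hc
        rw [tsub_eq_zero_iff_le] at hc
        exact absurd (lt_of_lt_of_le (ENNReal.ofReal_lt_one.mpr hq1) hc) (lt_irrefl _)
      · exact ENNReal.ofReal_ne_top
    exact ne_top_of_le_ne_top hgeo (ENNReal.tsum_le_tsum hle)
  have hlint_tsum : (∫⁻ ω, ∑' k, ENNReal.ofReal (Ψ k ω) ∂μ) ≠ ⊤ := by
    rw [MeasureTheory.lintegral_tsum (fun k => ((hmeasΨ k).ennreal_ofReal).aemeasurable)]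
    exact htsum
  have hae : ∀ᵐ ω ∂μ, (∑' k, ENNReal.ofReal (Ψ k ω)) < ⊤ :=
    MeasureTheory.ae_lt_top (Measurable.ennreal_tsum fun k => (hmeasΨ k).ennreal_ofReal)
      hlint_tsum
  -- almost sure conclusion
  filter_upwards [hae] with ω hω
  have hΨtend : Tendsto (fun k => Ψ k ω) atTop (nhds 0) := by
    have h1 : Tendsto (fun k => ENNReal.ofReal (Ψ k ω)) atTop (nhds 0) :=
      ENNReal.tendsto_atTop_zero_of_tsum_ne_top hω.ne
    have h2 := (ENNReal.tendsto_toReal (by simp : (0 : ENNReal) ≠ ⊤)).comp h1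
    have h3 : (fun k => (ENNReal.ofReal (Ψ k ω)).toReal) = fun k => Ψ k ω :=
      funext fun k => ENNReal.toReal_ofReal (hΨnn k ω)
    rw [show ((ENNReal.toReal ∘ fun k => ENNReal.ofReal (Ψ k ω))
      = fun k => (ENNReal.ofReal (Ψ k ω)).toReal) from rfl, h3] at h2
    simpa using h2
  -- pointwise consequences of `Ψ → 0`
  have hδnn : ∀ k, 0 ≤ f (X k ω) - f xstar := fun k => sub_nonneg.mpr (hmin _)
  have hsqrtδ : Tendsto (fun k => Real.sqrt (f (X k ω) - f xstar)) atTop (nhds 0) := by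
    apply squeeze_zero (fun k => Real.sqrt_nonneg _) (fun k => ?_) hΨtend
    rw [hΨ k ω]
    exact le_add_of_nonneg_right (mul_nonneg hβ.le (sq_nonneg _))
  have hδ0 : Tendsto (fun k => f (X k ω) - f xstar) atTop (nhds 0) := by
    have h1 := hsqrtδ.mul hsqrtδ
    rw [mul_zero] at h1
    have h2 : (fun k => Real.sqrt (f (X k ω) - f xstar) * Real.sqrt (f (X k ω) - f xstar))
        = fun k => f (X k ω) - f xstar :=
      funext fun k => Real.mul_self_sqrt (hδnn k)
    rwa [h2] at h1
  have hwk : Tendsto (fun k => wFrob Hs (Bm k ω - Hs⁻¹)) atTop (nhds 0) := by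
    have hsq : Tendsto (fun k => wFrob Hs (Bm k ω - Hs⁻¹) ^ 2) atTop (nhds 0) := by
      have hdiv : Tendsto (fun k => Ψ k ω / β) atTop (nhds 0) := by
        have h0 := hΨtend.div_const β
        simpa using h0
      apply squeeze_zero (fun k => sq_nonneg _) (fun k => ?_) hdiv
      · rw [le_div_iff₀ hβ]
        have h1 := hΨ k ω
        have h2 : β * wFrob Hs (Bm k ω - Hs⁻¹) ^ 2 ≤ Ψ k ω := by
          rw [h1]
          exact le_add_of_nonneg_left (Real.sqrt_nonneg _)
        calc wFrob Hs (Bm k ω - Hs⁻¹) ^ 2 * β = β * wFrob Hs (Bm k ω - Hs⁻¹) ^ 2 := by ring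
          _ ≤ Ψ k ω := h2
    have h1 := (Real.continuous_sqrt.tendsto 0).comp hsq
    have h2 : (Real.sqrt ∘ fun k => wFrob Hs (Bm k ω - Hs⁻¹) ^ 2)
        = fun k => wFrob Hs (Bm k ω - Hs⁻¹) := by
      funext k
      simp only [Function.comp_apply]
      exact Real.sqrt_sq (wFrob_nonneg _ _)
    rw [h2] at h1
    simpa using h1
  have hak : Tendsto (fun k => opNorm2 (Bm k ω - Hs⁻¹)) atTop (nhds 0) := by
    apply squeeze_zero (fun k => opNorm2_nonneg _)
      (fun k => opNorm2_le_wFrob hmu hPDs (hlbH xstar) _)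
    have h1 := hwk.const_mul mu⁻¹
    simpa using h1
  have hxk : Tendsto (fun k => ‖X k ω - xstar‖) atTop (nhds 0) := by
    have hbd : ∀ k, ‖X k ω - xstar‖ ≤ Real.sqrt (2 / mu * (f (X k ω) - f xstar)) := by
      intro k
      have h1 := hdist (X k ω)
      have h2 : ‖X k ω - xstar‖ ^ 2 ≤ 2 / mu * (f (X k ω) - f xstar) := by
        rw [div_mul_eq_mul_div, le_div_iff₀ hmu]
        calc ‖X k ω - xstar‖ ^ 2 * mu = mu * ‖X k ω - xstar‖ ^ 2 := by ring
          _ ≤ 2 * (f (X k ω) - f xstar) := h1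
      calc ‖X k ω - xstar‖ = Real.sqrt (‖X k ω - xstar‖ ^ 2) :=
            (Real.sqrt_sq (norm_nonneg _)).symm
        _ ≤ Real.sqrt (2 / mu * (f (X k ω) - f xstar)) := Real.sqrt_le_sqrt h2
    apply squeeze_zero (fun k => norm_nonneg _) hbd
    have h1 := hδ0.const_mul (2 / mu)
    rw [mul_zero] at h1
    have h2 := (Real.continuous_sqrt.tendsto 0).comp h1
    simpa [Function.comp_def] using h2
  -- the contraction factor
  set a : ℕ → ℝ := fun k => opNorm2 (Bm k ω - Hs⁻¹) with hadef
  set c : ℕ → ℝ := fun k => Real.sqrt (2 * L1 / mu) *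
    (L1 * a k + (a k + opNorm2 Hs⁻¹) * (L2 * ‖X k ω - xstar‖)) with hcdef
  have hcnn : ∀ k, 0 ≤ c k := by
    intro k
    apply mul_nonneg (Real.sqrt_nonneg _)
    apply add_nonneg
    · exact mul_nonneg hL1.le (opNorm2_nonneg _)
    · exact mul_nonneg (add_nonneg (opNorm2_nonneg _) (opNorm2_nonneg _))
        (mul_nonneg hL2.le (norm_nonneg _))
  have hc0 : Tendsto c atTop (nhds 0) := by
    have t1 : Tendsto (fun k => L1 * a k) atTop (nhds (L1 * 0)) := hak.const_mul L1
    have t2 : Tendsto (fun k => (a k + opNorm2 Hs⁻¹) * (L2 * ‖X k ω - xstar‖)) atTop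
        (nhds ((0 + opNorm2 Hs⁻¹) * (L2 * 0))) :=
      (hak.add_const _).mul (hxk.const_mul L2)
    have t3 := (t1.add t2).const_mul (Real.sqrt (2 * L1 / mu))
    simpa using t3
  -- the key one-step inequality
  have hkey : ∀ k, c k ≤ 1 →
      f (X (k + 1) ω) - f xstar ≤ c k ^ 2 * (f (X k ω) - f xstar) := by
    intro k hck
    have hOB : opNorm2 (Bm k ω) ≤ a k + opNorm2 Hs⁻¹ := by
      calc opNorm2 (Bm k ω) = opNorm2 ((Bm k ω - Hs⁻¹) + Hs⁻¹) := by rw [sub_add_cancel]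
        _ ≤ a k + opNorm2 Hs⁻¹ := opNorm2_add_le _ _
    have hb := one_step_bound hL1 hmu hL2.le f g Hs (Bm k ω) xstar (X k ω) hinvmul
      (hubH xstar) (happrox (X k ω)) hquad (hdist (X k ω))
    have hEnn : 0 ≤ L1 * opNorm2 (Bm k ω - Hs⁻¹)
        + opNorm2 (Bm k ω) * (L2 * ‖X k ω - xstar‖) := by
      apply add_nonneg (mul_nonneg hL1.le (opNorm2_nonneg _))
      exact mul_nonneg (opNorm2_nonneg _) (mul_nonneg hL2.le (norm_nonneg _))
    have hEle : L1 * opNorm2 (Bm k ω - Hs⁻¹) + opNorm2 (Bm k ω) * (L2 * ‖X k ω - xstar‖)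
        ≤ L1 * a k + (a k + opNorm2 Hs⁻¹) * (L2 * ‖X k ω - xstar‖) := by
      apply add_le_add_right
      exact mul_le_mul_of_nonneg_right hOB (mul_nonneg hL2.le (norm_nonneg _))
    have hc2 : c k ^ 2 = (2 * L1 / mu) *
        (L1 * a k + (a k + opNorm2 Hs⁻¹) * (L2 * ‖X k ω - xstar‖)) ^ 2 := by
      rw [hcdef]
      simp only []
      rw [mul_pow, Real.sq_sqrt (by positivity)]
    have hstep : f (X k ω - Matrix.toEuclideanLin (Bm k ω) (g (X k ω))) - f xstar
        ≤ c k ^ 2 * (f (X k ω) - f xstar) := by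
      calc f (X k ω - Matrix.toEuclideanLin (Bm k ω) (g (X k ω))) - f xstar
          ≤ (2 * L1 / mu) * (L1 * opNorm2 (Bm k ω - Hs⁻¹)
              + opNorm2 (Bm k ω) * (L2 * ‖X k ω - xstar‖)) ^ 2 * (f (X k ω) - f xstar) := hb
        _ ≤ (2 * L1 / mu) * (L1 * a k + (a k + opNorm2 Hs⁻¹) * (L2 * ‖X k ω - xstar‖)) ^ 2
              * (f (X k ω) - f xstar) := by
            apply mul_le_mul_of_nonneg_right _ (hδnn k)
            apply mul_le_mul_of_nonneg_left _ (by positivity)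
            exact pow_le_pow_left₀ hEnn hEle 2
        _ = c k ^ 2 * (f (X k ω) - f xstar) := by rw [hc2]
    have hacc : f (X k ω - Matrix.toEuclideanLin (Bm k ω) (g (X k ω))) ≤ f (X k ω) := by
      have h1 : c k ^ 2 * (f (X k ω) - f xstar) ≤ f (X k ω) - f xstar := by
        calc c k ^ 2 * (f (X k ω) - f xstar) ≤ 1 * (f (X k ω) - f xstar) :=
              mul_le_mul_of_nonneg_right (pow_le_one₀ (hcnn k) hck) (hδnn k)
          _ = f (X k ω) - f xstar := one_mul _
      linarith [hstep]
    calc f (X (k + 1) ω) - f xstar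
        = f (X k ω - Matrix.toEuclideanLin (Bm k ω) (g (X k ω))) - f xstar := by
          rw [hXstep k ω, if_pos hacc]
      _ ≤ c k ^ 2 * (f (X k ω) - f xstar) := hstep
  have hfin := ratio_tendsto_zero (δ := fun k => f (X k ω) - f xstar) (c := c)
    hδnn hc0 hcnn hkey
  exact hfin
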